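/- arXiv:1511.02111 — 5 statements merged into one kernel-verified Lean document; each statement's English description precedes it below -/
import Mathlib

section
/- For all nonnegative integers i, j, m, setting n = i + j + 2m, the number of square-lattice walks of length n that start at (0,0), end at (i,j), and are confined to the quadrant Q equals (i+1)·(j+1)·n!·(n+2)! / ( m!·(m+i+j+2)!·(m+i+1)!·(m+j+1)! ). -/
/-- Square-lattice steps. -/
def squareSteps : Set (ℤ × ℤ) := {(1,0), (-1,0), (0,1), (0,-1)}

/-- Diagonal-lattice steps. -/
def diagSteps : Set (ℤ × ℤ) := {(1,1), (1,-1), (-1,1), (-1,-1)}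

/-- The three-quadrant cone `C = {(i,j) : i ≥ 0 or j ≥ 0}`. -/
def coneC : Set (ℤ × ℤ) := {p | 0 ≤ p.1 ∨ 0 ≤ p.2}

/-- The quadrant `Q = {(i,j) : i ≥ 0 and j ≥ 0}`. -/
def quadQ : Set (ℤ × ℤ) := {p | 0 ≤ p.1 ∧ 0 ≤ p.2}

/-- Number of walks of length `n` with steps in `steps`, from `a` to `b`,
confined to `region`. -/
noncomputable def walkCount (steps region : Set (ℤ × ℤ)) (a b : ℤ × ℤ) (n : ℕ) : ℕ :=
  Nat.card {w : Fin (n+1) → ℤ × ℤ //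
    w 0 = a ∧ w (Fin.last n) = b ∧
    (∀ k : Fin n, w k.succ - w k.castSucc ∈ steps) ∧
    (∀ k, w k ∈ region)}

/-- The walk type. -/
def WT (n : ℕ) (a b : ℤ × ℤ) : Type :=
  {w : Fin (n+1) → ℤ × ℤ //
    w 0 = a ∧ w (Fin.last n) = b ∧
    (∀ k : Fin n, w k.succ - w k.castSucc ∈ squareSteps) ∧
    (∀ k, w k ∈ quadQ)}

lemma walkCount_eq (a b : ℤ × ℤ) (n : ℕ) :
    walkCount squareSteps quadQ a b n = Nat.card (WT n a b) := rfl

lemma sq_fin : squareSteps.Finite := by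
  unfold squareSteps
  exact (((Set.finite_singleton _).insert _).insert _).insert _

lemma walk_ext {n : ℕ} {w w' : Fin (n+1) → ℤ × ℤ} (h0 : w 0 = w' 0)
    (h : ∀ k : Fin n, w k.succ - w k.castSucc = w' k.succ - w' k.castSucc) : w = w' := by
  funext k
  induction k using Fin.induction with
  | zero => exact h0
  | succ i ih =>
    have hi := h i
    rw [ih] at hi
    exact sub_left_inj.mp hi

instance WT.finite (n : ℕ) (a b : ℤ × ℤ) : Finite (WT n a b) := by
  haveI : Finite ↥squareSteps := sq_fin.to_subtype
  apply Finite.of_injective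
    (fun w : WT n a b => fun k : Fin n =>
      (⟨w.1 k.succ - w.1 k.castSucc, w.2.2.2.1 k⟩ : ↥squareSteps))
  intro w w' h
  apply Subtype.ext
  apply walk_ext (by rw [w.2.1, w'.2.1])
  intro k
  exact congrArg Subtype.val (congrFun h k)

lemma count_nil (a : ℤ × ℤ) (ha : a ∈ quadQ) :
    walkCount squareSteps quadQ a a 0 = 1 := by
  rw [walkCount_eq]
  haveI : Unique (WT 0 a a) :=
    { default := ⟨fun _ => a, rfl, rfl, fun k => k.elim0, fun _ => ha⟩
      uniq := by
        intro w
        apply Subtype.ext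
        funext k
        rw [Fin.eq_zero k, w.2.1] }
  exact Nat.card_unique

lemma count_out (a b : ℤ × ℤ) (hb : b ∉ quadQ) (n : ℕ) :
    walkCount squareSteps quadQ a b n = 0 := by
  rw [walkCount_eq]
  haveI : IsEmpty (WT n a b) := ⟨fun w => hb (w.2.2.1 ▸ w.2.2.2.2 (Fin.last n))⟩
  exact Nat.card_of_isEmpty

lemma dist_bound {n : ℕ} {a : ℤ × ℤ} (w : Fin (n+1) → ℤ × ℤ) (h0 : w 0 = a)
    (hs : ∀ k : Fin n, w k.succ - w k.castSucc ∈ squareSteps) :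
    ∀ k : Fin (n+1), ((w k).1 - a.1).natAbs + ((w k).2 - a.2).natAbs ≤ (k : ℕ) := by
  intro k
  induction k using Fin.induction with
  | zero => simp [h0]
  | succ i ih =>
    have hk := hs i
    simp only [squareSteps, Set.mem_insert_iff, Set.mem_singleton_iff, Prod.ext_iff] at hk
    have e1 : (w i.succ - w i.castSucc).1 = (w i.succ).1 - (w i.castSucc).1 := rfl
    have e2 : (w i.succ - w i.castSucc).2 = (w i.succ).2 - (w i.castSucc).2 := rfl
    rw [e1, e2] at hk
    have hv : (i.succ : ℕ) = (i : ℕ) + 1 := Fin.val_succ i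
    have hv2 : ((i.castSucc : Fin (n+1)) : ℕ) = (i : ℕ) := rfl
    rw [hv]
    rcases hk with ⟨h1, h2⟩ | ⟨h1, h2⟩ | ⟨h1, h2⟩ | ⟨h1, h2⟩ <;> omega

lemma count_far (a b : ℤ × ℤ) (n : ℕ) (h : n < (b.1 - a.1).natAbs + (b.2 - a.2).natAbs) :
    walkCount squareSteps quadQ a b n = 0 := by
  rw [walkCount_eq]
  haveI : IsEmpty (WT n a b) := by
    constructor
    intro w
    have := dist_bound w.1 w.2.1 w.2.2.2.1 (Fin.last n)
    rw [w.2.2.1] at this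
    simp only [Fin.val_last] at this
    omega
  exact Nat.card_of_isEmpty

def sqFinset : Finset (ℤ × ℤ) := {(1,0), (-1,0), (0,1), (0,-1)}

lemma mem_sq {s : ℤ × ℤ} : s ∈ sqFinset ↔ s ∈ squareSteps := by
  simp [sqFinset, squareSteps]

lemma sigma_eq {n : ℕ} {a b : ℤ × ℤ} {s t : ↥sqFinset}
    {x : WT n a (b - s.1)} {y : WT n a (b - t.1)}
    (h1 : s.1 = t.1) (h2 : x.1 = y.1) :
    (⟨s, x⟩ : Σ u : ↥sqFinset, WT n a (b - u.1)) = ⟨t, y⟩ := by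
  obtain ⟨s, hs⟩ := s; obtain ⟨t, ht⟩ := t
  dsimp only at h1
  subst h1
  have : x = y := Subtype.ext h2
  subst this
  rfl

def recEquiv (n : ℕ) (a b : ℤ × ℤ) (hb : b ∈ quadQ) :
    WT (n+1) a b ≃ Σ s : ↥sqFinset, WT n a (b - s.1) where
  toFun w :=
    ⟨⟨b - w.1 (Fin.last n).castSucc, mem_sq.mpr (by
        have h := w.2.2.2.1 (Fin.last n)
        rwa [Fin.succ_last, w.2.2.1] at h)⟩,
      ⟨w.1 ∘ Fin.castSucc, by
        refine ⟨?_, ?_, ?_, ?_⟩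
        · show w.1 (Fin.castSucc 0) = a
          rw [Fin.castSucc_zero]; exact w.2.1
        · show w.1 (Fin.castSucc (Fin.last n)) = b - (b - w.1 (Fin.last n).castSucc)
          rw [sub_sub_cancel]
        · intro k
          show w.1 (Fin.castSucc k.succ) - w.1 (Fin.castSucc k.castSucc) ∈ squareSteps
          rw [← Fin.succ_castSucc]
          exact w.2.2.2.1 k.castSucc
        · intro k; exact w.2.2.2.2 _⟩⟩
  invFun x :=
    ⟨Fin.snoc x.2.1 b, by
      obtain ⟨⟨s, hs⟩, ⟨w, h0, hlast, hsteps, hreg⟩⟩ := x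
      dsimp only
      refine ⟨?_, ?_, ?_, ?_⟩
      · have h00 := Fin.snoc_castSucc (α := fun _ : Fin (n+2) => ℤ × ℤ) b w 0
        exact h00.trans h0
      · exact Fin.snoc_last _ _
      · intro k
        induction k using Fin.lastCases with
        | last =>
          rw [Fin.succ_last, Fin.snoc_last, Fin.snoc_castSucc, hlast, sub_sub_cancel]
          exact mem_sq.mp hs
        | cast j =>
          rw [Fin.succ_castSucc, Fin.snoc_castSucc, Fin.snoc_castSucc]
          exact hsteps j
      · intro k
        induction k using Fin.lastCases with
        | last => rw [Fin.snoc_last]; exact hb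
        | cast j => rw [Fin.snoc_castSucc]; exact hreg j⟩
  left_inv w := by
    apply Subtype.ext
    funext k
    show Fin.snoc (α := fun _ : Fin (n+2) => ℤ × ℤ) (w.1 ∘ Fin.castSucc) b k = w.1 k
    induction k using Fin.lastCases with
    | last => rw [Fin.snoc_last, w.2.2.1]
    | cast j => rw [Fin.snoc_castSucc]; rfl
  right_inv x := by
    obtain ⟨⟨s, hs⟩, ⟨w, h0, hlast, hsteps, hreg⟩⟩ := x
    apply sigma_eq
    · show b - Fin.snoc (α := fun _ : Fin (n+2) => ℤ × ℤ) w b (Fin.last n).castSucc = s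
      rw [Fin.snoc_castSucc, hlast, sub_sub_cancel]
    · show (Fin.snoc (α := fun _ : Fin (n+2) => ℤ × ℤ) w b) ∘ Fin.castSucc = w
      funext j
      exact Fin.snoc_castSucc _ _ _

lemma count_succ (n : ℕ) (a b : ℤ × ℤ) (hb : b ∈ quadQ) :
    walkCount squareSteps quadQ a b (n+1)
      = walkCount squareSteps quadQ a (b - (1,0)) n
        + walkCount squareSteps quadQ a (b - (-1,0)) n
        + walkCount squareSteps quadQ a (b - (0,1)) n
        + walkCount squareSteps quadQ a (b - (0,-1)) n := by
  rw [walkCount_eq, walkCount_eq, walkCount_eq, walkCount_eq, walkCount_eq,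
    Nat.card_congr (recEquiv n a b hb)]
  haveI : ∀ s : ↥sqFinset, Fintype (WT n a (b - s.1)) := fun s => Fintype.ofFinite _
  rw [Nat.card_eq_fintype_card, Fintype.card_sigma]
  rw [show (∑ s : ↥sqFinset, Fintype.card (WT n a (b - s.1)))
        = ∑ s : ↥sqFinset, Nat.card (WT n a (b - s.1)) from
      Finset.sum_congr rfl (fun s _ => Nat.card_eq_fintype_card.symm)]
  rw [Finset.sum_coe_sort sqFinset (fun x => Nat.card (WT n a (b - x)))]
  show ∑ x ∈ ({(1,0), (-1,0), (0,1), (0,-1)} : Finset (ℤ × ℤ)), Nat.card (WT n a (b - x)) = _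
  rw [Finset.sum_insert (by decide), Finset.sum_insert (by decide),
    Finset.sum_insert (by decide), Finset.sum_singleton]
  ring

noncomputable def F (i j m : ℕ) : ℚ :=
  ((i + 1) * (j + 1) * Nat.factorial (i + j + 2*m) *
      Nat.factorial (i + j + 2*m + 2) : ℚ) /
    (Nat.factorial m * Nat.factorial (m + i + j + 2) *
      Nat.factorial (m + i + 1) * Nat.factorial (m + j + 1))

lemma fs : ∀ k : ℕ, (Nat.factorial (k+1) : ℚ) = (k+1) * Nat.factorial k := by
  intro k; push_cast [Nat.factorial_succ]; ring

lemma fne : ∀ k : ℕ, (Nat.factorial k : ℚ) ≠ 0 := fun k =>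
  Nat.cast_ne_zero.mpr (Nat.factorial_ne_zero k)

lemma FI1 (a b c : ℕ) :
    F (a+1) (b+1) (c+1) = F a (b+1) (c+1) + F (a+2) (b+1) c + F (a+1) b (c+1) + F (a+1) (b+2) c := by
  unfold F
  simp only [show a+1+(b+1)+2*(c+1) = (a+b+2*c+3)+1 by ring,
      show a+b+2*c+3+1+2 = (a+b+2*c+3+1+1)+1 by ring,
      show c+1+(a+1)+(b+1)+2 = (a+b+c+4)+1 by ring,
      show c+1+(a+1)+1 = (a+c+2)+1 by ring,
      show c+1+(b+1)+1 = (b+c+2)+1 by ring,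
      show a+(b+1)+2*(c+1) = (a+b+2*c+3) by ring,
      show a+b+2*c+3+2 = (a+b+2*c+3+1)+1 by ring,
      show c+1+a+(b+1)+2 = (a+b+c+4) by ring,
      show c+1+a+1 = (a+c+2) by ring,
      show a+2+(b+1)+2*c = (a+b+2*c+3) by ring,
      show c+(a+2)+(b+1)+2 = (a+b+c+4)+1 by ring,
      show c+(a+2)+1 = (a+c+2)+1 by ring,
      show c+(b+1)+1 = (b+c+2) by ring,
      show a+1+b+2*(c+1) = (a+b+2*c+3) by ring,
      show c+1+(a+1)+b+2 = (a+b+c+4) by ring,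
      show c+1+b+1 = (b+c+2) by ring,
      show a+1+(b+2)+2*c = (a+b+2*c+3) by ring,
      show c+(a+1)+(b+2)+2 = (a+b+c+4)+1 by ring,
      show c+(a+1)+1 = (a+c+2) by ring,
      show c+(b+2)+1 = (b+c+2)+1 by ring]
  simp only [fs (a+b+2*c+3+1+1), fs (a+b+2*c+3+1), fs (a+b+2*c+3), fs (a+b+c+4),
      fs (a+c+2), fs (b+c+2), fs c]
  have h1 := fne (a+b+2*c+3); have h2 := fne (a+b+c+4); have h3 := fne (a+c+2)
  have h4 := fne (b+c+2); have h5 := fne c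
  push_cast
  field_simp
  ring

lemma FI2 (b c : ℕ) :
    F 0 (b+1) (c+1) = F 1 (b+1) c + F 0 b (c+1) + F 0 (b+2) c := by
  unfold F
  simp only [show 0+(b+1)+2*(c+1) = (b+2*c+2)+1 by ring,
      show b+2*c+2+1+2 = (b+2*c+2+1+1)+1 by ring,
      show c+1+0+(b+1)+2 = (b+c+2)+1+1 by ring,
      show c+1+0+1 = c+1+1 by ring,
      show c+1+(b+1)+1 = (b+c+2)+1 by ring,
      show 1+(b+1)+2*c = (b+2*c+2) by ring,
      show b+2*c+2+2 = (b+2*c+2+1)+1 by ring,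
      show c+1+(b+1)+2 = (b+c+2)+1+1 by ring,
      show c+(b+1)+1 = (b+c+2) by ring,
      show 0+b+2*(c+1) = (b+2*c+2) by ring,
      show c+1+0+b+2 = (b+c+2)+1 by ring,
      show c+1+b+1 = (b+c+2) by ring,
      show 0+(b+2)+2*c = (b+2*c+2) by ring,
      show c+0+(b+2)+2 = (b+c+2)+1+1 by ring,
      show c+0+1 = c+1 by ring,
      show c+(b+2)+1 = (b+c+2)+1 by ring]
  simp only [fs (b+2*c+2+1+1), fs (b+2*c+2+1), fs (b+2*c+2), fs (b+c+2+1), fs (b+c+2),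
      fs (c+1), fs c]
  have h1 := fne (b+2*c+2); have h2 := fne (b+c+2); have h3 := fne c
  push_cast
  field_simp
  ring

lemma FI3 (a c : ℕ) :
    F (a+1) 0 (c+1) = F a 0 (c+1) + F (a+2) 0 c + F (a+1) 1 c := by
  unfold F
  simp only [show a+1+0+2*(c+1) = (a+2*c+2)+1 by ring,
      show a+2*c+2+1+2 = (a+2*c+2+1+1)+1 by ring,
      show c+1+(a+1)+0+2 = (a+c+2)+1+1 by ring,
      show c+1+(a+1)+1 = (a+c+2)+1 by ring,
      show c+1+0+1 = c+1+1 by ring,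
      show a+0+2*(c+1) = (a+2*c+2) by ring,
      show a+2*c+2+2 = (a+2*c+2+1)+1 by ring,
      show c+1+a+0+2 = (a+c+2)+1 by ring,
      show c+1+a+1 = (a+c+2) by ring,
      show a+2+0+2*c = (a+2*c+2) by ring,
      show c+(a+2)+0+2 = (a+c+2)+1+1 by ring,
      show c+(a+2)+1 = (a+c+2)+1 by ring,
      show c+0+1 = c+1 by ring,
      show a+1+1+2*c = (a+2*c+2) by ring,
      show c+(a+1)+1+2 = (a+c+2)+1+1 by ring,
      show c+(a+1)+1 = (a+c+2) by ring]
  simp only [fs (a+2*c+2+1+1), fs (a+2*c+2+1), fs (a+2*c+2), fs (a+c+2+1), fs (a+c+2),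
      fs (c+1), fs c]
  have h1 := fne (a+2*c+2); have h2 := fne (a+c+2); have h3 := fne c
  push_cast
  field_simp
  ring

lemma FI4 (c : ℕ) : F 0 0 (c+1) = F 1 0 c + F 0 1 c := by
  unfold F
  simp only [show 0+0+2*(c+1) = (2*c+1)+1 by ring,
      show 2*c+1+1+2 = (2*c+1+1+1)+1 by ring,
      show c+1+0+0+2 = c+1+1+1 by ring,
      show c+1+0+1 = c+1+1 by ring,
      show 1+0+2*c = (2*c+1) by ring,
      show 2*c+1+2 = (2*c+1+1)+1 by ring,
      show c+1+0+2 = c+1+1+1 by ring,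
      show c+0+1 = c+1 by ring,
      show 0+1+2*c = (2*c+1) by ring,
      show c+0+1+2 = c+1+1+1 by ring]
  simp only [fs (2*c+1+1+1), fs (2*c+1+1), fs (2*c+1), fs (c+1+1), fs (c+1), fs c]
  have h1 := fne (2*c+1); have h2 := fne c
  push_cast
  field_simp
  ring

lemma FI5 (a b : ℕ) : F (a+1) (b+1) 0 = F a (b+1) 0 + F (a+1) b 0 := by
  unfold F
  simp only [show a+1+(b+1)+2*0 = (a+b+1)+1 by ring,
      show a+b+1+1+2 = (a+b+1+1+1)+1 by ring,
      show 0+(a+1)+(b+1)+2 = (a+b+1+1+1)+1 by ring,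
      show 0+(a+1)+1 = a+1+1 by ring,
      show 0+(b+1)+1 = b+1+1 by ring,
      show a+(b+1)+2*0 = (a+b+1) by ring,
      show a+b+1+2 = (a+b+1+1)+1 by ring,
      show 0+a+(b+1)+2 = (a+b+1+1)+1 by ring,
      show 0+a+1 = a+1 by ring,
      show a+1+b+2*0 = (a+b+1) by ring,
      show 0+(a+1)+b+2 = (a+b+1+1)+1 by ring,
      show 0+b+1 = b+1 by ring]
  simp only [fs (a+b+1+1+1), fs (a+b+1+1), fs (a+b+1), fs (a+1), fs a, fs (b+1), fs b]
  have h1 := fne (a+b+1); have h2 := fne a; have h3 := fne b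
  simp only [Nat.factorial_zero]
  push_cast
  field_simp
  ring

lemma FI6 (b : ℕ) : F 0 (b+1) 0 = F 0 b 0 := by
  unfold F
  simp only [show 0+(b+1)+2*0 = b+1 by ring,
      show b+1+2 = (b+1+1)+1 by ring,
      show 0+0+(b+1)+2 = (b+1+1)+1 by ring,
      show 0+0+1 = 1 by ring,
      show 0+(b+1)+1 = b+1+1 by ring,
      show 0+b+2*0 = b by ring,
      show b+2 = (b+1)+1 by ring,
      show 0+0+b+2 = (b+1)+1 by ring,
      show 0+b+1 = b+1 by ring]
  simp only [fs (b+1+1), fs (b+1), fs b]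
  have h1 := fne b
  simp only [Nat.factorial_zero, Nat.factorial_one]
  push_cast
  field_simp

lemma FI7 (a : ℕ) : F (a+1) 0 0 = F a 0 0 := by
  unfold F
  simp only [show a+1+0+2*0 = a+1 by ring,
      show a+1+2 = (a+1+1)+1 by ring,
      show 0+(a+1)+0+2 = (a+1+1)+1 by ring,
      show 0+(a+1)+1 = a+1+1 by ring,
      show 0+0+1 = 1 by ring,
      show a+0+2*0 = a by ring,
      show a+2 = (a+1)+1 by ring,
      show 0+a+0+2 = (a+1)+1 by ring,
      show 0+a+1 = a+1 by ring]
  simp only [fs (a+1+1), fs (a+1), fs a]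
  have h1 := fne a
  simp only [Nat.factorial_zero, Nat.factorial_one]
  push_cast
  field_simp

lemma count_far' (x y n : ℕ) (h : n < x + y) :
    walkCount squareSteps quadQ (0,0) ((x:ℤ), (y:ℤ)) n = 0 := by
  apply count_far
  show n < ((x:ℤ) - 0).natAbs + ((y:ℤ) - 0).natAbs
  omega

lemma main_count : ∀ n : ℕ, ∀ i j m : ℕ, i + j + 2*m = n →
    (walkCount squareSteps quadQ (0,0) ((i:ℤ), (j:ℤ)) n : ℚ) = F i j m := by
  intro n
  induction n using Nat.strong_induction_on with
  | _ n ih =>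
    rcases n with _ | n
    · intro i j m hn
      obtain ⟨rfl, rfl, rfl⟩ : i = 0 ∧ j = 0 ∧ m = 0 := by omega
      rw [show (((0:ℕ):ℤ), ((0:ℕ):ℤ)) = ((0:ℤ), (0:ℤ)) from by norm_num]
      rw [count_nil (0,0) ⟨le_refl 0, le_refl 0⟩]
      norm_num [F]
    · intro i j m hn
      have hb : (((i:ℕ):ℤ), ((j:ℕ):ℤ)) ∈ quadQ := ⟨Int.natCast_nonneg i, Int.natCast_nonneg j⟩
      rw [count_succ n _ _ hb]
      rw [show (((i:ℕ):ℤ), ((j:ℕ):ℤ)) - (1,0) = (((i:ℕ):ℤ)-1, ((j:ℕ):ℤ)) from by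
            simp [Prod.ext_iff],
          show (((i:ℕ):ℤ), ((j:ℕ):ℤ)) - (-1,0) = (((i:ℕ):ℤ)+1, ((j:ℕ):ℤ)) from by
            simp [Prod.ext_iff, sub_neg_eq_add],
          show (((i:ℕ):ℤ), ((j:ℕ):ℤ)) - (0,1) = (((i:ℕ):ℤ), ((j:ℕ):ℤ)-1) from by
            simp [Prod.ext_iff],
          show (((i:ℕ):ℤ), ((j:ℕ):ℤ)) - (0,-1) = (((i:ℕ):ℤ), ((j:ℕ):ℤ)+1) from by
            simp [Prod.ext_iff, sub_neg_eq_add]]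
      have hlt := Nat.lt_succ_self n
      rcases m with _ | m' <;> rcases i with _ | i' <;> rcases j with _ | j'
      · omega
      · -- m=0, i=0, j=j'+1  (FI6)
        rw [show ((((0:ℕ):ℤ)+1), ((j'+1:ℕ):ℤ)) = (((1:ℕ):ℤ), ((j'+1:ℕ):ℤ)) from by
              rw [Prod.mk.injEq]; constructor <;> push_cast <;> ring,
            show (((0:ℕ):ℤ), (((j'+1:ℕ):ℤ)-1)) = (((0:ℕ):ℤ), ((j':ℕ):ℤ)) from by
              rw [Prod.mk.injEq]; constructor <;> push_cast <;> ring,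
            show (((0:ℕ):ℤ), (((j'+1:ℕ):ℤ)+1)) = (((0:ℕ):ℤ), ((j'+2:ℕ):ℤ)) from by
              rw [Prod.mk.injEq]; constructor <;> push_cast <;> ring]
        rw [count_out (0,0) ((((0:ℕ):ℤ)-1), ((j'+1:ℕ):ℤ)) (by norm_num [quadQ]) n,
            count_far' 1 (j'+1) n (by omega), count_far' 0 (j'+2) n (by omega)]
        simp only [Nat.zero_add, Nat.add_zero, zero_add, add_zero]
        rw [ih n hlt 0 j' 0 (by omega), FI6 j']
      · -- m=0, i=i'+1, j=0  (FI7)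
        rw [show ((((i'+1:ℕ):ℤ)-1), ((0:ℕ):ℤ)) = (((i':ℕ):ℤ), ((0:ℕ):ℤ)) from by
              rw [Prod.mk.injEq]; constructor <;> push_cast <;> ring,
            show ((((i'+1:ℕ):ℤ)+1), ((0:ℕ):ℤ)) = (((i'+2:ℕ):ℤ), ((0:ℕ):ℤ)) from by
              rw [Prod.mk.injEq]; constructor <;> push_cast <;> ring,
            show (((i'+1:ℕ):ℤ), (((0:ℕ):ℤ)+1)) = (((i'+1:ℕ):ℤ), ((1:ℕ):ℤ)) from by
              rw [Prod.mk.injEq]; constructor <;> push_cast <;> ring]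
        rw [count_far' (i'+2) 0 n (by omega), count_far' (i'+1) 1 n (by omega),
            count_out (0,0) (((i'+1:ℕ):ℤ), (((0:ℕ):ℤ)-1)) (by norm_num [quadQ]) n]
        simp only [Nat.zero_add, Nat.add_zero, zero_add, add_zero]
        rw [ih n hlt i' 0 0 (by omega), FI7 i']
      · -- m=0, i=i'+1, j=j'+1  (FI5)
        rw [show ((((i'+1:ℕ):ℤ)-1), ((j'+1:ℕ):ℤ)) = (((i':ℕ):ℤ), ((j'+1:ℕ):ℤ)) from by
              rw [Prod.mk.injEq]; constructor <;> push_cast <;> ring,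
            show ((((i'+1:ℕ):ℤ)+1), ((j'+1:ℕ):ℤ)) = (((i'+2:ℕ):ℤ), ((j'+1:ℕ):ℤ)) from by
              rw [Prod.mk.injEq]; constructor <;> push_cast <;> ring,
            show (((i'+1:ℕ):ℤ), (((j'+1:ℕ):ℤ)-1)) = (((i'+1:ℕ):ℤ), ((j':ℕ):ℤ)) from by
              rw [Prod.mk.injEq]; constructor <;> push_cast <;> ring,
            show (((i'+1:ℕ):ℤ), (((j'+1:ℕ):ℤ)+1)) = (((i'+1:ℕ):ℤ), ((j'+2:ℕ):ℤ)) from by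
              rw [Prod.mk.injEq]; constructor <;> push_cast <;> ring]
        rw [count_far' (i'+2) (j'+1) n (by omega), count_far' (i'+1) (j'+2) n (by omega)]
        simp only [Nat.zero_add, Nat.add_zero, zero_add, add_zero]
        rw [Nat.cast_add, ih n hlt i' (j'+1) 0 (by omega),
            ih n hlt (i'+1) j' 0 (by omega), FI5 i' j']
      · -- m=m'+1, i=0, j=0  (FI4)
        rw [show ((((0:ℕ):ℤ)+1), ((0:ℕ):ℤ)) = (((1:ℕ):ℤ), ((0:ℕ):ℤ)) from by
              rw [Prod.mk.injEq]; constructor <;> push_cast <;> ring,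
            show (((0:ℕ):ℤ), (((0:ℕ):ℤ)+1)) = (((0:ℕ):ℤ), ((1:ℕ):ℤ)) from by
              rw [Prod.mk.injEq]; constructor <;> push_cast <;> ring]
        rw [count_out (0,0) ((((0:ℕ):ℤ)-1), ((0:ℕ):ℤ)) (by norm_num [quadQ]) n,
            count_out (0,0) (((0:ℕ):ℤ), (((0:ℕ):ℤ)-1)) (by norm_num [quadQ]) n]
        simp only [Nat.zero_add, Nat.add_zero, zero_add, add_zero]
        rw [Nat.cast_add, ih n hlt 1 0 m' (by omega), ih n hlt 0 1 m' (by omega), FI4 m']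
      · -- m=m'+1, i=0, j=j'+1  (FI2)
        rw [show ((((0:ℕ):ℤ)+1), ((j'+1:ℕ):ℤ)) = (((1:ℕ):ℤ), ((j'+1:ℕ):ℤ)) from by
              rw [Prod.mk.injEq]; constructor <;> push_cast <;> ring,
            show (((0:ℕ):ℤ), (((j'+1:ℕ):ℤ)-1)) = (((0:ℕ):ℤ), ((j':ℕ):ℤ)) from by
              rw [Prod.mk.injEq]; constructor <;> push_cast <;> ring,
            show (((0:ℕ):ℤ), (((j'+1:ℕ):ℤ)+1)) = (((0:ℕ):ℤ), ((j'+2:ℕ):ℤ)) from by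
              rw [Prod.mk.injEq]; constructor <;> push_cast <;> ring]
        rw [count_out (0,0) ((((0:ℕ):ℤ)-1), ((j'+1:ℕ):ℤ)) (by norm_num [quadQ]) n]
        simp only [Nat.zero_add, Nat.add_zero, zero_add, add_zero]
        rw [Nat.cast_add, Nat.cast_add, ih n hlt 1 (j'+1) m' (by omega),
            ih n hlt 0 j' (m'+1) (by omega), ih n hlt 0 (j'+2) m' (by omega), FI2 j' m']
      · -- m=m'+1, i=i'+1, j=0  (FI3)
        rw [show ((((i'+1:ℕ):ℤ)-1), ((0:ℕ):ℤ)) = (((i':ℕ):ℤ), ((0:ℕ):ℤ)) from by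
              rw [Prod.mk.injEq]; constructor <;> push_cast <;> ring,
            show ((((i'+1:ℕ):ℤ)+1), ((0:ℕ):ℤ)) = (((i'+2:ℕ):ℤ), ((0:ℕ):ℤ)) from by
              rw [Prod.mk.injEq]; constructor <;> push_cast <;> ring,
            show (((i'+1:ℕ):ℤ), (((0:ℕ):ℤ)+1)) = (((i'+1:ℕ):ℤ), ((1:ℕ):ℤ)) from by
              rw [Prod.mk.injEq]; constructor <;> push_cast <;> ring]
        rw [count_out (0,0) (((i'+1:ℕ):ℤ), (((0:ℕ):ℤ)-1)) (by norm_num [quadQ]) n]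
        simp only [Nat.zero_add, Nat.add_zero, zero_add, add_zero]
        rw [Nat.cast_add, Nat.cast_add, ih n hlt i' 0 (m'+1) (by omega),
            ih n hlt (i'+2) 0 m' (by omega), ih n hlt (i'+1) 1 m' (by omega), FI3 i' m']
      · -- m=m'+1, i=i'+1, j=j'+1  (FI1)
        rw [show ((((i'+1:ℕ):ℤ)-1), ((j'+1:ℕ):ℤ)) = (((i':ℕ):ℤ), ((j'+1:ℕ):ℤ)) from by
              rw [Prod.mk.injEq]; constructor <;> push_cast <;> ring,
            show ((((i'+1:ℕ):ℤ)+1), ((j'+1:ℕ):ℤ)) = (((i'+2:ℕ):ℤ), ((j'+1:ℕ):ℤ)) from by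
              rw [Prod.mk.injEq]; constructor <;> push_cast <;> ring,
            show (((i'+1:ℕ):ℤ), (((j'+1:ℕ):ℤ)-1)) = (((i'+1:ℕ):ℤ), ((j':ℕ):ℤ)) from by
              rw [Prod.mk.injEq]; constructor <;> push_cast <;> ring,
            show (((i'+1:ℕ):ℤ), (((j'+1:ℕ):ℤ)+1)) = (((i'+1:ℕ):ℤ), ((j'+2:ℕ):ℤ)) from by
              rw [Prod.mk.injEq]; constructor <;> push_cast <;> ring]
        rw [Nat.cast_add, Nat.cast_add, Nat.cast_add,
            ih n hlt i' (j'+1) (m'+1) (by omega), ih n hlt (i'+2) (j'+1) m' (by omega),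
            ih n hlt (i'+1) j' (m'+1) (by omega), ih n hlt (i'+1) (j'+2) m' (by omega),
            FI1 i' j' m']

theorem square_quadrant_count (i j m : ℕ) :
    (walkCount squareSteps quadQ (0, 0) ((i : ℤ), (j : ℤ)) (i + j + 2*m) : ℚ) =
      ((i + 1) * (j + 1) * Nat.factorial (i + j + 2*m) *
          Nat.factorial (i + j + 2*m + 2) : ℚ) /
        (Nat.factorial m * Nat.factorial (m + i + j + 2) *
          Nat.factorial (m + i + 1) * Nat.factorial (m + j + 1)) := by
  rw [main_count (i + j + 2*m) i j m rfl]
  rfl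
end

section
/- For all integers i ≥ 0, j ≥ 0 and all n ≥ 0, let c_{i,j}(n) denote the number of square-lattice walks of length n from (0,0) to (i,j) confined to the three-quadrant cone C, and let q_{i,j}(n) denote the number of square-lattice walks of length n from (0,0) to (i,j) confined to the quadrant Q. Then c_{i,j}(n) = q_{i,j}(n) + c_{−i−2,j}(n) + c_{i,−j−2}(n). -/
namespace TQR

variable {n : ℕ}

abbrev Walk (steps region : Set (ℤ × ℤ)) (a b : ℤ × ℤ) (n : ℕ) :=
  {w : Fin (n+1) → ℤ × ℤ //
    w 0 = a ∧ w (Fin.last n) = b ∧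
    (∀ k : Fin n, w k.succ - w k.castSucc ∈ steps) ∧
    (∀ k, w k ∈ region)}

lemma squareSteps_cases {s : ℤ × ℤ} (h : s ∈ squareSteps) :
    s = (1,0) ∨ s = (-1,0) ∨ s = (0,1) ∨ s = (0,-1) := by
  simpa [squareSteps] using h

lemma step_bounds {s : ℤ × ℤ} (h : s ∈ squareSteps) :
    -1 ≤ s.1 ∧ s.1 ≤ 1 ∧ -1 ≤ s.2 ∧ s.2 ≤ 1 := by
  rcases squareSteps_cases h with rfl | rfl | rfl | rfl <;> norm_num

lemma negx_mem {s : ℤ × ℤ} (h : s ∈ squareSteps) : (-s.1, s.2) ∈ squareSteps := by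
  rcases squareSteps_cases h with rfl | rfl | rfl | rfl <;> norm_num [squareSteps]

lemma sw_mem {s : ℤ × ℤ} (h : s ∈ squareSteps) : (s.2, s.1) ∈ squareSteps := by
  rcases squareSteps_cases h with rfl | rfl | rfl | rfl <;> norm_num [squareSteps]

lemma squareSteps_finite : squareSteps.Finite := by
  unfold squareSteps
  exact (((Set.finite_singleton _).insert _).insert _).insert _

open Classical in
noncomputable def lastIdx (p : ℤ × ℤ → Prop) (w : Fin (n+1) → ℤ × ℤ) : ℕ :=
  (Finset.univ.filter fun k => p (w k)).sup Fin.val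

lemma le_lastIdx {p : ℤ × ℤ → Prop} {w : Fin (n+1) → ℤ × ℤ} {k : Fin (n+1)}
    (h : p (w k)) : (k : ℕ) ≤ lastIdx p w := by
  classical
  unfold lastIdx
  exact Finset.le_sup (by simp [Finset.mem_filter, h])

lemma lastIdx_le {p : ℤ × ℤ → Prop} {w : Fin (n+1) → ℤ × ℤ} {m : ℕ}
    (h : ∀ k : Fin (n+1), p (w k) → (k : ℕ) ≤ m) : lastIdx p w ≤ m := by
  classical
  unfold lastIdx
  apply Finset.sup_le
  intro k hk
  exact h k (by simpa using (Finset.mem_filter.1 hk).2)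

lemma lastIdx_lt {p : ℤ × ℤ → Prop} {w : Fin (n+1) → ℤ × ℤ} : lastIdx p w < n + 1 :=
  Nat.lt_succ_of_le (lastIdx_le fun k _ => Nat.lt_succ_iff.1 k.isLt)

lemma exists_lastIdx {p : ℤ × ℤ → Prop} {w : Fin (n+1) → ℤ × ℤ}
    (h : ∃ k, p (w k)) : ∃ k : Fin (n+1), p (w k) ∧ (k : ℕ) = lastIdx p w := by
  classical
  obtain ⟨k, hk⟩ := h
  obtain ⟨b, hb, he⟩ := Finset.exists_mem_eq_sup
    (Finset.univ.filter fun k => p (w k)) ⟨k, Finset.mem_filter.2 ⟨Finset.mem_univ _, hk⟩⟩ Fin.val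
  refine ⟨b, by simpa using (Finset.mem_filter.1 hb).2, ?_⟩
  unfold lastIdx
  exact he.symm

lemma lastIdx_congr {p q : ℤ × ℤ → Prop} {w v : Fin (n+1) → ℤ × ℤ}
    (h : ∀ k, p (w k) ↔ q (v k)) : lastIdx p w = lastIdx q v := by
  classical
  unfold lastIdx
  congr 1
  ext k
  simp only [Finset.mem_filter, Finset.mem_univ, true_and]
  exact h k

/-! ### predicates -/

noncomputable def TQ (w : Fin (n+1) → ℤ × ℤ) : ℕ := lastIdx (fun p => p ∉ quadQ) w

noncomputable def finTQ (w : Fin (n+1) → ℤ × ℤ) : Fin (n+1) := ⟨TQ w, lastIdx_lt⟩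

def P0 (w : Fin (n+1) → ℤ × ℤ) : Prop := ∀ k, w k ∈ quadQ

noncomputable def PW (w : Fin (n+1) → ℤ × ℤ) : Prop := ¬ P0 w ∧ (w (finTQ w)).1 = -1

noncomputable def PS (w : Fin (n+1) → ℤ × ℤ) : Prop := ¬ P0 w ∧ (w (finTQ w)).2 = -1

lemma mem_quad_of_TQ_lt {w : Fin (n+1) → ℤ × ℤ} {m : Fin (n+1)} (h : TQ w < (m : ℕ)) :
    w m ∈ quadQ := by
  by_contra hq
  exact absurd (le_lastIdx (p := fun p => p ∉ quadQ) hq) (not_le.2 h)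

lemma finTQ_notin_quad {w : Fin (n+1) → ℤ × ℤ} (hnp : ¬ P0 w) : w (finTQ w) ∉ quadQ := by
  have hex : ∃ k, w k ∉ quadQ := by
    by_contra h
    push_neg at h
    exact hnp h
  obtain ⟨t, ht, htv⟩ := exists_lastIdx (p := fun p => p ∉ quadQ) hex
  have : t = finTQ w := Fin.ext htv
  rwa [← this]

/-! ### reflection -/

def rx (p : ℤ × ℤ) : ℤ × ℤ := (-2 - p.1, p.2)

noncomputable def Tx (w : Fin (n+1) → ℤ × ℤ) : ℕ := lastIdx (fun p => p.1 = -1) w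

noncomputable def rho (w : Fin (n+1) → ℤ × ℤ) : Fin (n+1) → ℤ × ℤ :=
  fun k => if (k : ℕ) ≤ Tx w then w k else rx (w k)

lemma le_Tx {w : Fin (n+1) → ℤ × ℤ} {k : Fin (n+1)} (h : (w k).1 = -1) : (k : ℕ) ≤ Tx w :=
  le_lastIdx (p := fun p => p.1 = -1) h

lemma le_TQ {w : Fin (n+1) → ℤ × ℤ} {k : Fin (n+1)} (h : w k ∉ quadQ) : (k : ℕ) ≤ TQ w :=
  le_lastIdx (p := fun p => p ∉ quadQ) h

lemma rx_rx (p : ℤ × ℤ) : rx (rx p) = p := by simp [rx]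

lemma rx_fst {p : ℤ × ℤ} : (rx p).1 = -1 ↔ p.1 = -1 := by
  simp only [rx]
  omega

lemma Tx_rho (w : Fin (n+1) → ℤ × ℤ) : Tx (rho w) = Tx w := by
  apply lastIdx_congr
  intro k
  by_cases h : (k : ℕ) ≤ Tx w <;> simp [rho, h, rx_fst]

lemma rho_rho (w : Fin (n+1) → ℤ × ℤ) : rho (rho w) = w := by
  funext k
  by_cases h : (k : ℕ) ≤ Tx w <;> simp [rho, Tx_rho, h, rx_rx]

lemma rx_sub (a b : ℤ × ℤ) : rx a - rx b = (-(a - b).1, (a - b).2) := by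
  simp [rx, Prod.ext_iff]

lemma rx_self_of_fst {p : ℤ × ℤ} (h : p.1 = -1) : rx p = p := by
  simp [rx, Prod.ext_iff]
  omega

/-! ### discrete IVT -/

lemma fin_ivt (w : Fin (n+1) → ℤ × ℤ)
    (hs : ∀ k : Fin n, w k.succ - w k.castSucc ∈ squareSteps)
    (a b : Fin (n+1)) (hab : a ≤ b) (v : ℤ) (ha : v < (w a).1) (hb : (w b).1 < v) :
    ∃ m : Fin (n+1), a ≤ m ∧ m ≤ b ∧ (w m).1 = v := by
  classical
  set t := Finset.univ.filter (fun m : Fin (n+1) => a ≤ m ∧ (w m).1 ≤ v) with ht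
  have hbt : b ∈ t := by
    simp only [ht, Finset.mem_filter, Finset.mem_univ, true_and]
    exact ⟨hab, hb.le⟩
  have hne : t.Nonempty := ⟨b, hbt⟩
  set m := t.min' hne with hmdef
  have hm : m ∈ t := t.min'_mem hne
  obtain ⟨ham, hmv⟩ := (Finset.mem_filter.1 hm).2
  have hmb : m ≤ b := t.min'_le b hbt
  have hne' : a ≠ m := by
    intro h
    rw [← h] at hmv
    omega
  have halm : a < m := lt_of_le_of_ne ham hne'
  have h1 : 1 ≤ (m : ℕ) := by
    have := Fin.lt_iff_val_lt_val.1 halm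
    omega
  have hmn : (m : ℕ) - 1 < n := by
    have := m.isLt
    omega
  set k : Fin n := ⟨(m : ℕ) - 1, hmn⟩ with hk
  have hsucc : k.succ = m := by
    apply Fin.ext
    simp [hk, Fin.val_succ]
    omega
  have hcs : ((k.castSucc : Fin (n+1)) : ℕ) = (m : ℕ) - 1 := rfl
  have hlt : k.castSucc < m := by
    rw [Fin.lt_iff_val_lt_val, hcs]
    omega
  have hnotmem : k.castSucc ∉ t := by
    intro h
    exact absurd (t.min'_le _ h) (not_le.2 hlt)
  have hak : a ≤ k.castSucc := by
    rw [Fin.le_iff_val_le_val, hcs]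
    have := Fin.lt_iff_val_lt_val.1 halm
    omega
  have hwk : v < (w k.castSucc).1 := by
    by_contra h
    push_neg at h
    exact hnotmem (Finset.mem_filter.2 ⟨Finset.mem_univ _, hak, h⟩)
  have hstep := step_bounds (hs k)
  rw [Prod.fst_sub, Prod.snd_sub] at hstep
  rw [hsucc] at hstep
  refine ⟨m, ham, hmb, ?_⟩
  omega


/-! ### rho preserves steps -/

lemma rho_isWalk {w : Fin (n+1) → ℤ × ℤ}
    (hs : ∀ k : Fin n, w k.succ - w k.castSucc ∈ squareSteps)
    (hex : ∃ k, (w k).1 = -1) :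
    ∀ k : Fin n, rho w k.succ - rho w k.castSucc ∈ squareSteps := by
  obtain ⟨t, ht, htv⟩ := exists_lastIdx (p := fun p => p.1 = -1) hex
  intro k
  have hd := hs k
  have hvs : (k.succ : ℕ) = (k : ℕ) + 1 := rfl
  have hvc : ((k.castSucc : Fin (n+1)) : ℕ) = (k : ℕ) := rfl
  have htv' : (t : ℕ) = Tx w := htv
  by_cases h1 : ((k.succ : Fin (n+1)) : ℕ) ≤ Tx w
  · have h2 : ((k.castSucc : Fin (n+1)) : ℕ) ≤ Tx w := by omega
    simp only [rho]
    rw [if_pos h1, if_pos h2]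
    exact hd
  · by_cases h2 : ((k.castSucc : Fin (n+1)) : ℕ) ≤ Tx w
    · have heq : ((k.castSucc : Fin (n+1)) : ℕ) = Tx w := by omega
      have hteq : k.castSucc = t := Fin.ext (by omega)
      have hxc : (w k.castSucc).1 = -1 := by rw [hteq]; exact ht
      have hfix : rx (w k.castSucc) = w k.castSucc := rx_self_of_fst hxc
      simp only [rho]
      rw [if_pos h2, if_neg h1, ← hfix, rx_sub]
      exact negx_mem hd
    · simp only [rho]
      rw [if_neg h1, if_neg h2, rx_sub]
      exact negx_mem hd

/-! ### forward direction -/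

lemma forward_mem (i j : ℤ) (hi : 0 ≤ i) (hj : 0 ≤ j) {w : Fin (n+1) → ℤ × ℤ}
    (h0 : w 0 = (0,0)) (hl : w (Fin.last n) = (i,j))
    (hs : ∀ k : Fin n, w k.succ - w k.castSucc ∈ squareSteps)
    (hc : ∀ k, w k ∈ coneC) (hP : PW w) :
    rho w 0 = (0,0) ∧ rho w (Fin.last n) = (-i-2, j) ∧
      (∀ k : Fin n, rho w k.succ - rho w k.castSucc ∈ squareSteps) ∧
      (∀ k, rho w k ∈ coneC) := by
  obtain ⟨hnp, hx⟩ := hP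
  have htq : w (finTQ w) ∉ quadQ := finTQ_notin_quad hnp
  -- Tx w = TQ w
  have hTx : Tx w = TQ w := by
    apply le_antisymm
    · apply lastIdx_le
      intro k hk
      apply le_TQ
      intro hq
      rw [quadQ] at hq
      simp at hq
      omega
    · have h := le_Tx (w := w) (k := finTQ w) hx
      simpa [finTQ] using h
  have hex : ∃ k, (w k).1 = -1 := ⟨finTQ w, hx⟩
  -- finTQ w ≠ last
  have hlast : TQ w < n := by
    have hne : finTQ w ≠ Fin.last n := by
      intro h
      apply htq
      rw [h, hl]
      exact ⟨hi, hj⟩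
    have h1 : TQ w ≤ n := Nat.lt_succ_iff.1 (lastIdx_lt)
    have h2 : TQ w ≠ n := fun h => hne (Fin.ext (by simpa [finTQ] using h))
    omega
  refine ⟨?_, ?_, rho_isWalk hs hex, ?_⟩
  · have : ((0 : Fin (n+1)) : ℕ) ≤ Tx w := by simp
    simp only [rho, if_pos this]
    exact h0
  · have : ¬ ((Fin.last n : Fin (n+1)) : ℕ) ≤ Tx w := by
      simp only [Fin.val_last]
      omega
    simp only [rho, if_neg this]
    rw [hl]
    simp [rx, Prod.ext_iff]
    ring
  · intro k
    by_cases h : (k : ℕ) ≤ Tx w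
    · simp only [rho, if_pos h]
      exact hc k
    · simp only [rho, if_neg h]
      have hq : w k ∈ quadQ := mem_quad_of_TQ_lt (by omega)
      rw [quadQ] at hq
      right
      exact hq.2

/-! ### backward direction -/

lemma backward_mem (i j : ℤ) (hi : 0 ≤ i) (hj : 0 ≤ j) {w : Fin (n+1) → ℤ × ℤ}
    (h0 : w 0 = (0,0)) (hl : w (Fin.last n) = (-i-2, j))
    (hs : ∀ k : Fin n, w k.succ - w k.castSucc ∈ squareSteps)
    (hc : ∀ k, w k ∈ coneC) :
    (rho w 0 = (0,0) ∧ rho w (Fin.last n) = (i, j) ∧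
      (∀ k : Fin n, rho w k.succ - rho w k.castSucc ∈ squareSteps) ∧
      (∀ k, rho w k ∈ coneC)) ∧ PW (rho w) := by
  have hx0 : (w 0).1 = 0 := by rw [h0]
  have hxl : (w (Fin.last n)).1 = -i-2 := by rw [hl]
  have hex : ∃ k, (w k).1 = -1 := by
    obtain ⟨m, _, _, hm⟩ := fin_ivt w hs 0 (Fin.last n) (Fin.zero_le _) (-1)
      (by omega) (by omega)
    exact ⟨m, hm⟩
  obtain ⟨t, ht, htv⟩ := exists_lastIdx (p := fun p => p.1 = -1) hex
  have htv' : (t : ℕ) = Tx w := htv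
  have hTxlt : Tx w < n := by
    have hne : t ≠ Fin.last n := by
      intro h
      rw [h] at ht
      omega
    have h1 : Tx w ≤ n := Nat.lt_succ_iff.1 lastIdx_lt
    have h2 : Tx w ≠ n := by
      intro h
      exact hne (Fin.ext (by rw [Fin.val_last]; omega))
    omega
  have hgt : ∀ m : Fin (n+1), Tx w < (m : ℕ) → (w m).1 ≤ -2 := by
    intro m hm
    have hne : (w m).1 ≠ -1 := by
      intro h
      exact absurd (le_Tx h) (not_le.2 hm)
    by_contra hge
    push_neg at hge
    have hge' : 0 ≤ (w m).1 := by omega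
    obtain ⟨m', hm1, _, hm3⟩ := fin_ivt w hs m (Fin.last n) (Fin.le_last _) (-1)
      (by omega) (by omega)
    have hA := le_Tx hm3
    have hB := Fin.le_iff_val_le_val.1 hm1
    omega
  have hwalk : (∀ k : Fin n, rho w k.succ - rho w k.castSucc ∈ squareSteps) :=
    rho_isWalk hs hex
  have hcone : ∀ k, rho w k ∈ coneC := by
    intro k
    by_cases h : (k : ℕ) ≤ Tx w
    · simp only [rho, if_pos h]; exact hc k
    · simp only [rho, if_neg h]
      have h2 : (w k).1 ≤ -2 := hgt k (by omega)
      have h3 : 0 ≤ (w k).2 := by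
        rcases hc k with h' | h'
        · omega
        · exact h'
      left
      simp only [rx]
      omega
  have h0' : rho w 0 = (0,0) := by
    have : ((0 : Fin (n+1)) : ℕ) ≤ Tx w := by simp
    simp only [rho, if_pos this]
    exact h0
  have hl' : rho w (Fin.last n) = (i, j) := by
    have : ¬ ((Fin.last n : Fin (n+1)) : ℕ) ≤ Tx w := by
      simp only [Fin.val_last]; omega
    simp only [rho, if_neg this]
    rw [hl]
    simp [rx, Prod.ext_iff]
    ring
  -- PW (rho w)
  have hrt : rho w t = w t := by
    have : (t : ℕ) ≤ Tx w := by omega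
    simp only [rho, if_pos this]
  have htnq : w t ∉ quadQ := by
    intro hq
    rw [quadQ] at hq
    have := hq.1
    omega
  have hTQ : TQ (rho w) = Tx w := by
    apply le_antisymm
    · apply lastIdx_le
      intro k hk
      by_contra hgtk
      push_neg at hgtk
      apply hk
      simp only [rho, if_neg (by omega : ¬ (k : ℕ) ≤ Tx w)]
      have h2 : (w k).1 ≤ -2 := hgt k (by omega)
      have h3 : 0 ≤ (w k).2 := by
        rcases hc k with h' | h'
        · omega
        · exact h'
      exact ⟨by simp only [rx]; omega, h3⟩
    · have hA : rho w t ∉ quadQ := by rw [hrt]; exact htnq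
      have hB := le_TQ hA
      omega
  have hfin : finTQ (rho w) = t := by
    apply Fin.ext
    simp only [finTQ]
    omega
  refine ⟨⟨h0', hl', hwalk, hcone⟩, ?_, ?_⟩
  · intro hp
    have h := hp t
    rw [hrt] at h
    exact htnq h
  · rw [hfin, hrt]
    exact ht


/-! ### finiteness -/

lemma walk_finite (steps region : Set (ℤ × ℤ)) (hst : steps.Finite) (a b : ℤ × ℤ) (n : ℕ) :
    Finite (Walk steps region a b n) := by
  haveI := hst.to_subtype
  apply Finite.of_injective
    (f := fun w : Walk steps region a b n =>
      (fun k : Fin n => (⟨w.1 k.succ - w.1 k.castSucc, w.2.2.2.1 k⟩ : steps)))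
  intro w w' h
  apply Subtype.ext
  funext k
  obtain ⟨h0, -, -, -⟩ := w.2
  obtain ⟨h0', -, -, -⟩ := w'.2
  have key : ∀ m (hm : m < n+1), w.1 ⟨m, hm⟩ = w'.1 ⟨m, hm⟩ := by
    intro m
    induction m with
    | zero =>
      intro hm
      have e : (⟨0, hm⟩ : Fin (n+1)) = 0 := Fin.ext (by simp)
      rw [e, h0, h0']
    | succ m ih =>
      intro hm
      have hm' : m < n + 1 := by omega
      have hmn : m < n := by omega
      have hk := congrFun h ⟨m, hmn⟩
      have hk' := Subtype.ext_iff.1 hk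
      have e1 : ((⟨m, hmn⟩ : Fin n)).succ = ⟨m+1, hm⟩ := rfl
      have e2 : ((⟨m, hmn⟩ : Fin n)).castSucc = ⟨m, hm'⟩ := rfl
      simp only at hk'
      rw [e1, e2] at hk'
      calc w.1 ⟨m+1, hm⟩ = w.1 ⟨m+1, hm⟩ - w.1 ⟨m, hm'⟩ + w.1 ⟨m, hm'⟩ := by ring
        _ = w'.1 ⟨m+1, hm⟩ - w'.1 ⟨m, hm'⟩ + w'.1 ⟨m, hm'⟩ := by rw [hk', ih hm']
        _ = w'.1 ⟨m+1, hm⟩ := by ring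
  exact key k.1 k.2

/-! ### the quadrant equivalence -/

def equivQ (i j : ℤ) :
    {w : Walk squareSteps coneC (0,0) (i,j) n // P0 w.1} ≃
      Walk squareSteps quadQ (0,0) (i,j) n where
  toFun w := ⟨w.1.1, w.1.2.1, w.1.2.2.1, w.1.2.2.2.1, w.2⟩
  invFun w := ⟨⟨w.1, w.2.1, w.2.2.1, w.2.2.2.1,
    fun k => Or.inl (w.2.2.2.2 k).1⟩, w.2.2.2.2⟩
  left_inv w := by
    apply Subtype.ext
    apply Subtype.ext
    rfl
  right_inv w := rfl

/-! ### the west reflection equivalence -/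

noncomputable def equivW (i j : ℤ) (hi : 0 ≤ i) (hj : 0 ≤ j) :
    {w : Walk squareSteps coneC (0,0) (i,j) n // PW w.1} ≃
      Walk squareSteps coneC (0,0) (-i-2, j) n where
  toFun w := ⟨rho w.1.1,
    forward_mem i j hi hj w.1.2.1 w.1.2.2.1 w.1.2.2.2.1 w.1.2.2.2.2 w.2⟩
  invFun w :=
    ⟨⟨rho w.1, (backward_mem i j hi hj w.2.1 w.2.2.1 w.2.2.2.1 w.2.2.2.2).1⟩,
      (backward_mem i j hi hj w.2.1 w.2.2.1 w.2.2.2.1 w.2.2.2.2).2⟩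
  left_inv w := by
    apply Subtype.ext
    apply Subtype.ext
    exact rho_rho _
  right_inv w := by
    apply Subtype.ext
    exact rho_rho _


/-! ### coordinate swap -/

def sw (p : ℤ × ℤ) : ℤ × ℤ := (p.2, p.1)

lemma sw_quad {p : ℤ × ℤ} : sw p ∈ quadQ ↔ p ∈ quadQ := by
  simp [quadQ, sw, and_comm]

lemma P0_sw {w : Fin (n+1) → ℤ × ℤ} : P0 (fun k => sw (w k)) ↔ P0 w :=
  forall_congr' fun _ => sw_quad

lemma TQ_sw {w : Fin (n+1) → ℤ × ℤ} : TQ (fun k => sw (w k)) = TQ w :=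
  lastIdx_congr fun k => not_congr sw_quad

lemma PW_sw {w : Fin (n+1) → ℤ × ℤ} : PW (fun k => sw (w k)) ↔ PS w := by
  have hf : finTQ (fun k => sw (w k)) = finTQ w := Fin.ext (by simp only [finTQ]; exact TQ_sw)
  unfold PW PS
  rw [hf]
  exact and_congr (not_congr P0_sw) Iff.rfl

lemma PS_sw {w : Fin (n+1) → ℤ × ℤ} : PS (fun k => sw (w k)) ↔ PW w := by
  have hf : finTQ (fun k => sw (w k)) = finTQ w := Fin.ext (by simp only [finTQ]; exact TQ_sw)
  unfold PW PS
  rw [hf]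
  exact and_congr (not_congr P0_sw) Iff.rfl

lemma sw_walk_part {a b c d : ℤ} {w : Fin (n+1) → ℤ × ℤ}
    (h0 : w 0 = (a, b)) (hl : w (Fin.last n) = (c, d))
    (hs : ∀ k : Fin n, w k.succ - w k.castSucc ∈ squareSteps)
    (hc : ∀ k, w k ∈ coneC) :
    (fun k => sw (w k)) 0 = (b, a) ∧ (fun k => sw (w k)) (Fin.last n) = (d, c) ∧
    (∀ k : Fin n, (fun k => sw (w k)) k.succ - (fun k => sw (w k)) k.castSucc ∈ squareSteps) ∧
    (∀ k, (fun k => sw (w k)) k ∈ coneC) := by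
  refine ⟨by simp only; rw [h0]; rfl, by simp only; rw [hl]; rfl, ?_, ?_⟩
  · intro k
    simp only
    have he : sw (w k.succ) - sw (w k.castSucc) =
        ((w k.succ - w k.castSucc).2, (w k.succ - w k.castSucc).1) := by
      simp [sw]
    rw [he]
    exact sw_mem (hs k)
  · intro k
    have := hc k
    simp only [coneC, Set.mem_setOf_eq, sw] at this ⊢
    tauto

noncomputable def equivSP (a b c d : ℤ) :
    {w : Walk squareSteps coneC (a,b) (c,d) n // PS w.1} ≃
      {w : Walk squareSteps coneC (b,a) (d,c) n // PW w.1} where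
  toFun w := ⟨⟨fun k => sw (w.1.1 k),
      sw_walk_part w.1.2.1 w.1.2.2.1 w.1.2.2.2.1 w.1.2.2.2.2⟩, PW_sw.2 w.2⟩
  invFun w := ⟨⟨fun k => sw (w.1.1 k),
      sw_walk_part w.1.2.1 w.1.2.2.1 w.1.2.2.2.1 w.1.2.2.2.2⟩, PS_sw.2 w.2⟩
  left_inv w := by
    apply Subtype.ext
    apply Subtype.ext
    funext k
    simp [sw]
  right_inv w := by
    apply Subtype.ext
    apply Subtype.ext
    funext k
    simp [sw]

def swEquiv (a b c d : ℤ) :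
    Walk squareSteps coneC (a,b) (c,d) n ≃ Walk squareSteps coneC (b,a) (d,c) n where
  toFun w := ⟨fun k => sw (w.1 k), sw_walk_part w.2.1 w.2.2.1 w.2.2.2.1 w.2.2.2.2⟩
  invFun w := ⟨fun k => sw (w.1 k), sw_walk_part w.2.1 w.2.2.1 w.2.2.2.1 w.2.2.2.2⟩
  left_inv w := by
    apply Subtype.ext
    funext k
    simp [sw]
  right_inv w := by
    apply Subtype.ext
    funext k
    simp [sw]

/-! ### exactly one of PW / PS -/

lemma lastOut_xor (i j : ℤ) (hi : 0 ≤ i) (hj : 0 ≤ j) {w : Fin (n+1) → ℤ × ℤ}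
    (h0 : w 0 = (0,0)) (hl : w (Fin.last n) = (i,j))
    (hs : ∀ k : Fin n, w k.succ - w k.castSucc ∈ squareSteps)
    (hc : ∀ k, w k ∈ coneC) (hnp : ¬ P0 w) :
    ((w (finTQ w)).1 = -1 ↔ ¬ (w (finTQ w)).2 = -1) := by
  have htq : w (finTQ w) ∉ quadQ := finTQ_notin_quad hnp
  have hlastQ : w (Fin.last n) ∈ quadQ := by rw [hl]; exact ⟨hi, hj⟩
  have hTQn : TQ w < n := by
    have h1 : TQ w ≤ n := Nat.lt_succ_iff.1 lastIdx_lt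
    have h2 : TQ w ≠ n := by
      intro h
      apply htq
      have : finTQ w = Fin.last n := Fin.ext (by simp [finTQ, h])
      rw [this]
      exact hlastQ
    omega
  set k : Fin n := ⟨TQ w, hTQn⟩ with hk
  have hcs : k.castSucc = finTQ w := rfl
  have hsuccQ : w k.succ ∈ quadQ := by
    apply mem_quad_of_TQ_lt
    simp [Fin.val_succ, hk]
  have hstep := step_bounds (hs k)
  rw [Prod.fst_sub, Prod.snd_sub, hcs] at hstep
  have hconeT := hc (finTQ w)
  simp only [coneC, Set.mem_setOf_eq] at hconeT
  simp only [quadQ, Set.mem_setOf_eq, not_and, not_le] at htq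
  obtain ⟨hq1, hq2⟩ := hsuccQ
  constructor
  · intro hx
    intro hy
    omega
  · intro hy
    by_contra hx
    omega


/-! ### counting -/

lemma card_split (i j : ℤ) (hi : 0 ≤ i) (hj : 0 ≤ j) :
    Nat.card (Walk squareSteps coneC (0,0) (i,j) n) =
      Nat.card {w : Walk squareSteps coneC (0,0) (i,j) n // P0 w.1} +
      Nat.card {w : Walk squareSteps coneC (0,0) (i,j) n // PW w.1} +
      Nat.card {w : Walk squareSteps coneC (0,0) (i,j) n // PS w.1} := by
  classical
  set A := Walk squareSteps coneC (0,0) (i,j) n with hA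
  haveI : Finite A := walk_finite _ _ squareSteps_finite _ _ _
  have h1 : Nat.card A = Nat.card {w : A // P0 w.1} + Nat.card {w : A // ¬ P0 w.1} := by
    rw [← Nat.card_sum]
    exact Nat.card_congr (Equiv.sumCompl fun w : A => P0 w.1).symm
  have e1 : {b : {w : A // ¬ P0 w.1} // (b.1.1 (finTQ b.1.1)).1 = -1} ≃ {w : A // PW w.1} :=
    { toFun := fun b => ⟨b.1.1, b.1.2, b.2⟩
      invFun := fun w => ⟨⟨w.1, w.2.1⟩, w.2.2⟩
      left_inv := fun b => rfl
      right_inv := fun w => rfl }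
  have e2 : {b : {w : A // ¬ P0 w.1} // ¬ (b.1.1 (finTQ b.1.1)).1 = -1} ≃ {w : A // PS w.1} :=
    { toFun := fun b => ⟨b.1.1, b.1.2, by
        have hx := lastOut_xor i j hi hj b.1.1.2.1 b.1.1.2.2.1 b.1.1.2.2.2.1
          b.1.1.2.2.2.2 b.1.2
        by_contra hy
        exact b.2 (hx.2 hy)⟩
      invFun := fun w => ⟨⟨w.1, w.2.1⟩, by
        have hx := lastOut_xor i j hi hj w.1.2.1 w.1.2.2.1 w.1.2.2.2.1 w.1.2.2.2.2 w.2.1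
        intro h
        exact (hx.1 h) w.2.2⟩
      left_inv := fun b => rfl
      right_inv := fun w => rfl }
  have h2 : Nat.card {w : A // ¬ P0 w.1} =
      Nat.card {w : A // PW w.1} + Nat.card {w : A // PS w.1} := by
    rw [← Nat.card_congr e1, ← Nat.card_congr e2, ← Nat.card_sum]
    exact Nat.card_congr (Equiv.sumCompl
      fun b : {w : A // ¬ P0 w.1} => (b.1.1 (finTQ b.1.1)).1 = -1).symm
  rw [h1, h2, ← Nat.add_assoc]

end TQR

theorem square_threeQuadrant_reflection_identity (i j : ℤ) (hi : 0 ≤ i) (hj : 0 ≤ j) (n : ℕ) :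
    walkCount squareSteps coneC (0, 0) (i, j) n =
      walkCount squareSteps quadQ (0, 0) (i, j) n +
        walkCount squareSteps coneC (0, 0) (-i - 2, j) n +
        walkCount squareSteps coneC (0, 0) (i, -j - 2) n := by
  classical
  show Nat.card (TQR.Walk squareSteps coneC (0,0) (i,j) n) =
    Nat.card (TQR.Walk squareSteps quadQ (0,0) (i,j) n) +
    Nat.card (TQR.Walk squareSteps coneC (0,0) (-i-2,j) n) +
    Nat.card (TQR.Walk squareSteps coneC (0,0) (i,-j-2) n)
  rw [TQR.card_split i j hi hj]
  congr 1
  congr 1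
  · exact Nat.card_congr (TQR.equivQ i j)
  · exact Nat.card_congr (TQR.equivW i j hi hj)
  · exact Nat.card_congr ((TQR.equivSP 0 0 i j).trans
      ((TQR.equivW j i hj hi).trans (TQR.swEquiv 0 0 (-j-2) i)))
end

section
/- For all integers i ≥ 0, j ≥ 0 and all n ≥ 0, let c_{i,j}(n) denote the number of diagonal-lattice walks of length n from (0,0) to (i,j) confined to the three-quadrant cone C, and let q_{i,j}(n) denote the number of diagonal-lattice walks of length n from (0,0) to (i,j) confined to the quadrant Q. Then c_{i,j}(n) = q_{i,j}(n) + c_{−i−2,j}(n) + c_{i,−j−2}(n). -/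
namespace DiagRefl

lemma diag_mem_iff {d : ℤ × ℤ} :
    d ∈ diagSteps ↔ (d.1 = 1 ∨ d.1 = -1) ∧ (d.2 = 1 ∨ d.2 = -1) := by
  constructor
  · intro h
    simp only [diagSteps, Set.mem_insert_iff, Set.mem_singleton_iff] at h
    rcases h with h|h|h|h <;> subst h <;> simp
  · rintro ⟨h1, h2⟩
    have hd : d = (d.1, d.2) := rfl
    simp only [diagSteps, Set.mem_insert_iff, Set.mem_singleton_iff]
    rcases h1 with h1|h1 <;> rcases h2 with h2|h2 <;>
      simp [diagSteps, Prod.ext_iff, h1, h2]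

lemma diag_negx {d : ℤ × ℤ} (h : d ∈ diagSteps) : ((-d.1, d.2) : ℤ × ℤ) ∈ diagSteps := by
  rw [diag_mem_iff] at h ⊢
  obtain ⟨h1, h2⟩ := h
  refine ⟨?_, h2⟩
  rcases h1 with h1|h1 <;> simp [h1]

lemma diag_swap {d : ℤ × ℤ} (h : d ∈ diagSteps) : ((d.2, d.1) : ℤ × ℤ) ∈ diagSteps := by
  rw [diag_mem_iff] at h ⊢
  exact ⟨h.2, h.1⟩

/-- Walks indexed by `ℕ`, frozen after time `n`. -/
def NatWalk (n : ℕ) (R : Set (ℤ × ℤ)) (b : ℤ × ℤ) (f : ℕ → ℤ × ℤ) : Prop :=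
  f 0 = (0,0) ∧ f n = b ∧ (∀ k, k < n → f (k+1) - f k ∈ diagSteps) ∧
    (∀ k, k ≤ n → f k ∈ R) ∧ (∀ k, n ≤ k → f k = f n)

def extW (n : ℕ) (w : Fin (n+1) → ℤ × ℤ) : ℕ → ℤ × ℤ :=
  fun k => w ⟨min k n, by omega⟩

lemma extW_eq (n : ℕ) (w : Fin (n+1) → ℤ × ℤ) (k : ℕ) (hk : k ≤ n) :
    extW n w k = w ⟨k, by omega⟩ := by
  unfold extW
  congr 1
  ext
  simp [Nat.min_eq_left hk]

def walkEquiv (R : Set (ℤ × ℤ)) (b : ℤ × ℤ) (n : ℕ) :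
    {w : Fin (n+1) → ℤ × ℤ //
      w 0 = (0,0) ∧ w (Fin.last n) = b ∧
      (∀ k : Fin n, w k.succ - w k.castSucc ∈ diagSteps) ∧
      (∀ k, w k ∈ R)} ≃ {f : ℕ → ℤ × ℤ // NatWalk n R b f} where
  toFun := fun w => ⟨extW n w.1, by
    obtain ⟨w, h0, hn, hs, hr⟩ := w
    refine ⟨?_, ?_, ?_, ?_, ?_⟩
    · rw [extW_eq n w 0 (Nat.zero_le n)]
      have h : (⟨0, by omega⟩ : Fin (n+1)) = 0 := by ext; simp
      rw [h, h0]
    · rw [extW_eq n w n le_rfl]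
      have h : (⟨n, by omega⟩ : Fin (n+1)) = Fin.last n := by ext; simp [Fin.last]
      rw [h, hn]
    · intro k hk
      rw [extW_eq n w (k+1) (by omega), extW_eq n w k (by omega)]
      have := hs ⟨k, hk⟩
      rwa [Fin.succ_mk, Fin.castSucc_mk] at this
    · intro k hk
      rw [extW_eq n w k hk]; exact hr _
    · intro k hk
      unfold extW
      have h1 : min k n = n := by omega
      have h2 : min n n = n := by omega
      simp only [h1, h2]⟩
  invFun := fun f => ⟨fun k => f.1 k, by
    obtain ⟨f, h0, hn, hs, hr, _⟩ := f
    refine ⟨?_, ?_, ?_, ?_⟩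
    · simpa using h0
    · simpa using hn
    · intro k
      have := hs k k.isLt
      simpa using this
    · intro k
      exact hr k (by omega)⟩
  left_inv := by
    rintro ⟨w, hw⟩
    apply Subtype.ext
    funext k
    show extW n w k.val = w k
    rw [extW_eq n w k.val (Fin.is_le k)]
  right_inv := by
    rintro ⟨f, h0, hn, hs, hr, hfr⟩
    apply Subtype.ext
    funext k
    show f (min k n) = f k
    rcases le_or_gt k n with hk | hk
    · rw [Nat.min_eq_left hk]
    · rw [Nat.min_eq_right (le_of_lt hk), hfr k (le_of_lt hk), hfr n le_rfl]

lemma walkCount_eq_ncard (R : Set (ℤ × ℤ)) (b : ℤ × ℤ) (n : ℕ) :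
    walkCount diagSteps R (0,0) b n = {f : ℕ → ℤ × ℤ | NatWalk n R b f}.ncard := by
  rw [walkCount, ← Nat.card_coe_set_eq]
  exact Nat.card_congr (walkEquiv R b n)

/-- Discrete intermediate value theorem, descending version. -/
lemma ivt_desc {g : ℕ → ℤ} {n a b : ℕ}
    (hstep : ∀ k, k < n → g (k+1) - g k = 1 ∨ g (k+1) - g k = -1)
    (hab : a ≤ b) (hbn : b ≤ n) {c : ℤ} (ha : c ≤ g a) (hb : g b ≤ c) :
    ∃ k, a ≤ k ∧ k ≤ b ∧ g k = c := by
  have hex : ∃ k, a ≤ k ∧ k ≤ b ∧ g k ≤ c := ⟨b, hab, le_rfl, hb⟩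
  classical
  obtain ⟨hma, hmb, hmc⟩ := Nat.find_spec hex
  refine ⟨Nat.find hex, hma, hmb, ?_⟩
  by_cases heq : Nat.find hex = a
  · rw [heq] at hmc ⊢
    omega
  · have hlt : a < Nat.find hex := by omega
    have h3 : c < g (Nat.find hex - 1) := by
      by_contra h
      exact Nat.find_min hex (show Nat.find hex - 1 < Nat.find hex by omega)
        ⟨by omega, by omega, by omega⟩
    have hst := hstep (Nat.find hex - 1) (by omega)
    rw [show Nat.find hex - 1 + 1 = Nat.find hex from by omega] at hst
    omega

section Reflection

/-- x-coordinate steps of a walk are `±1`. -/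
lemma xstep {n : ℕ} {R b} {f : ℕ → ℤ × ℤ} (hf : NatWalk n R b f) :
    ∀ k, k < n → (f (k+1)).1 - (f k).1 = 1 ∨ (f (k+1)).1 - (f k).1 = -1 := by
  intro k hk
  have := (diag_mem_iff.1 (hf.2.2.1 k hk)).1
  simpa [Prod.fst_sub] using this

lemma ystep {n : ℕ} {R b} {f : ℕ → ℤ × ℤ} (hf : NatWalk n R b f) :
    ∀ k, k < n → (f (k+1)).2 - (f k).2 = 1 ∨ (f (k+1)).2 - (f k).2 = -1 := by
  intro k hk
  have := (diag_mem_iff.1 (hf.2.2.1 k hk)).2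
  simpa [Prod.snd_sub] using this

/-- Last time (up to `n`) at which the x-coordinate equals `-1`. -/
def Tx (n : ℕ) (f : ℕ → ℤ × ℤ) : ℕ := Nat.findGreatest (fun k => (f k).1 = -1) n

def reflX (n : ℕ) (f : ℕ → ℤ × ℤ) : ℕ → ℤ × ℤ :=
  fun k => if k ≤ Tx n f then f k else (-2 - (f k).1, (f k).2)

lemma Tx_spec {n : ℕ} {f : ℕ → ℤ × ℤ} {k : ℕ} (hk : k ≤ n) (h : (f k).1 = -1) :
    (f (Tx n f)).1 = -1 :=
  Nat.findGreatest_spec (P := fun k => (f k).1 = -1) hk h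

lemma Tx_le_of {n : ℕ} {f : ℕ → ℤ × ℤ} {k : ℕ} (hk : k ≤ n) (h : (f k).1 = -1) :
    k ≤ Tx n f :=
  Nat.le_findGreatest (P := fun k => (f k).1 = -1) hk h

lemma Tx_greatest {n : ℕ} {f : ℕ → ℤ × ℤ} {k : ℕ} (h1 : Tx n f < k) (h2 : k ≤ n) :
    ¬ ((f k).1 = -1) :=
  Nat.findGreatest_is_greatest (P := fun k => (f k).1 = -1) h1 h2

lemma findGreatest_congr {P Q : ℕ → Prop} [DecidablePred P] [DecidablePred Q]
    (h : ∀ k, P k ↔ Q k) : ∀ n, Nat.findGreatest P n = Nat.findGreatest Q n := by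
  intro n
  induction n with
  | zero => rfl
  | succ n ih =>
    rw [Nat.findGreatest_succ, Nat.findGreatest_succ, ih]
    by_cases hP : P (n+1)
    · rw [if_pos hP, if_pos ((h (n+1)).1 hP)]
    · rw [if_neg hP, if_neg (fun hQ => hP ((h (n+1)).2 hQ))]

lemma Tx_reflX (n : ℕ) (f : ℕ → ℤ × ℤ) : Tx n (reflX n f) = Tx n f := by
  apply findGreatest_congr
  intro k
  simp only [reflX]
  split_ifs with h
  · exact Iff.rfl
  · constructor <;> intro h' <;> omega

lemma reflX_involutive (n : ℕ) : Function.Involutive (reflX n) := by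
  intro f
  funext k
  simp only [reflX, Tx_reflX]
  split_ifs with h
  · rfl
  · simp only
    rw [show (-2 - (-2 - (f k).1) : ℤ) = (f k).1 by ring]

lemma reflX_snd (n : ℕ) (f : ℕ → ℤ × ℤ) (k : ℕ) : (reflX n f k).2 = (f k).2 := by
  simp only [reflX]; split_ifs <;> rfl

/-- When the x-coordinate at time `Tx` is `-1`, the reflection formula holds for all
`k ≥ Tx`. -/
lemma reflX_ge {n : ℕ} {f : ℕ → ℤ × ℤ} (hT : (f (Tx n f)).1 = -1)
    {k : ℕ} (hk : Tx n f ≤ k) : reflX n f k = (-2 - (f k).1, (f k).2) := by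
  simp only [reflX]
  split_ifs with h
  · have hke : k = Tx n f := le_antisymm h hk
    have h2 : (-2 - (f k).1 : ℤ) = (f k).1 := by rw [hke, hT]; norm_num
    rw [h2]
  · rfl

lemma reflX_le {n : ℕ} {f : ℕ → ℤ × ℤ} {k : ℕ} (hk : k ≤ Tx n f) :
    reflX n f k = f k := by
  simp only [reflX, if_pos hk]

/-- Reflection preserves the diagonal-step property, provided `x (Tx) = -1`. -/
lemma reflX_steps {n : ℕ} {R b} {f : ℕ → ℤ × ℤ} (hf : NatWalk n R b f)
    (hT : (f (Tx n f)).1 = -1) :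
    ∀ k, k < n → reflX n f (k+1) - reflX n f k ∈ diagSteps := by
  intro k hk
  rcases le_or_gt (k+1) (Tx n f) with h | h
  · rw [reflX_le h, reflX_le (by omega)]
    exact hf.2.2.1 k hk
  · rw [reflX_ge hT (by omega), reflX_ge hT (by omega)]
    rw [diag_mem_iff]
    have hx := xstep hf k hk
    have hy := ystep hf k hk
    constructor
    · simp only [Prod.fst_sub]
      omega
    · simp only [Prod.snd_sub]
      omega

end Reflection


section Main

def Aset (n : ℕ) (b : ℤ × ℤ) : Set (ℕ → ℤ × ℤ) := {f | NatWalk n coneC b f}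
def Qset (n : ℕ) (b : ℤ × ℤ) : Set (ℕ → ℤ × ℤ) := {f | NatWalk n quadQ b f}
def Xset (n : ℕ) (b : ℤ × ℤ) : Set (ℕ → ℤ × ℤ) :=
  {f | NatWalk n coneC b f ∧
    ∃ k, k ≤ n ∧ (f k).1 = -1 ∧ ∀ m, k ≤ m → m ≤ n → 0 ≤ (f m).2}
def Yset (n : ℕ) (b : ℤ × ℤ) : Set (ℕ → ℤ × ℤ) :=
  {f | NatWalk n coneC b f ∧
    ∃ k, k ≤ n ∧ (f k).2 = -1 ∧ ∀ m, k ≤ m → m ≤ n → 0 ≤ (f m).1}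

lemma quad_sub_cone : quadQ ⊆ coneC := fun _ hp => Or.inl hp.1

lemma Qsub {n b} : Qset n b ⊆ Aset n b := by
  rintro f ⟨h0, hn, hs, hr, hfr⟩
  exact ⟨h0, hn, hs, fun k hk => quad_sub_cone (hr k hk), hfr⟩

lemma Xsub {n b} : Xset n b ⊆ Aset n b := fun _ hf => hf.1
lemma Ysub {n b} : Yset n b ⊆ Aset n b := fun _ hf => hf.1

lemma cover (n : ℕ) (b : ℤ × ℤ) : Aset n b = Qset n b ∪ Xset n b ∪ Yset n b := by
  apply Set.Subset.antisymm
  · intro f hf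
    obtain ⟨h0, hn, hs, hr, hfr⟩ := hf
    by_cases hq : ∀ k, k ≤ n → f k ∈ quadQ
    · exact Or.inl (Or.inl ⟨h0, hn, hs, hq, hfr⟩)
    · push_neg at hq
      obtain ⟨m0, hm0n, hm0⟩ := hq
      have hwalk : NatWalk n coneC b f := ⟨h0, hn, hs, hr, hfr⟩
      have hx0 : (f 0).1 = 0 := by rw [h0]
      have hy0 : (f 0).2 = 0 := by rw [h0]
      -- there is a time where some coordinate is -1
      have hex : ∃ k, k ≤ n ∧ ((f k).1 = -1 ∨ (f k).2 = -1) := by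
        have hneg : (f m0).1 < 0 ∨ (f m0).2 < 0 := by
          by_contra h
          push_neg at h
          exact hm0 ⟨h.1, h.2⟩
        rcases hneg with h | h
        · obtain ⟨k, _, hk2, hk3⟩ := ivt_desc (g := fun k => (f k).1) (xstep hwalk) (Nat.zero_le m0) hm0n
            (show (-1:ℤ) ≤ (f 0).1 by omega) (show (f m0).1 ≤ -1 by omega)
          exact ⟨k, le_trans hk2 hm0n, Or.inl hk3⟩
        · obtain ⟨k, _, hk2, hk3⟩ := ivt_desc (g := fun k => (f k).2) (ystep hwalk) (Nat.zero_le m0) hm0n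
            (show (-1:ℤ) ≤ (f 0).2 by omega) (show (f m0).2 ≤ -1 by omega)
          exact ⟨k, le_trans hk2 hm0n, Or.inr hk3⟩
      classical
      set P : ℕ → Prop := fun k => (f k).1 = -1 ∨ (f k).2 = -1 with hP
      set T := Nat.findGreatest P n with hTdef
      obtain ⟨k0, hk0n, hk0⟩ := hex
      have hT : P T := Nat.findGreatest_spec hk0n hk0
      have hTn : T ≤ n := Nat.findGreatest_le n
      rcases hT with hTx | hTy
      · -- x-coordinate is -1 at T : the walk is in Xset
        have hyT : 0 ≤ (f T).2 := by
          rcases hr T hTn with h | h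
          · omega
          · exact h
        left; right
        refine ⟨hwalk, T, hTn, hTx, ?_⟩
        intro m hm1 hm2
        by_contra hneg
        obtain ⟨m', hm'1, hm'2, hm'3⟩ := ivt_desc (g := fun k => (f k).2) (ystep hwalk) hm1 hm2
          (show (-1:ℤ) ≤ (f T).2 by omega) (show (f m).2 ≤ -1 by omega)
        have hm'T : T < m' := by
          rcases eq_or_lt_of_le hm'1 with h | h
          · exfalso; rw [← h] at hm'3; omega
          · exact h
        exact Nat.findGreatest_is_greatest hm'T (le_trans hm'2 hm2) (Or.inr hm'3)
      · -- y-coordinate is -1 at T : the walk is in Yset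
        have hxT : 0 ≤ (f T).1 := by
          rcases hr T hTn with h | h
          · exact h
          · omega
        right
        refine ⟨hwalk, T, hTn, hTy, ?_⟩
        intro m hm1 hm2
        by_contra hneg
        obtain ⟨m', hm'1, hm'2, hm'3⟩ := ivt_desc (g := fun k => (f k).1) (xstep hwalk) hm1 hm2
          (show (-1:ℤ) ≤ (f T).1 by omega) (show (f m).1 ≤ -1 by omega)
        have hm'T : T < m' := by
          rcases eq_or_lt_of_le hm'1 with h | h
          · exfalso; rw [← h] at hm'3; omega
          · exact h
        exact Nat.findGreatest_is_greatest hm'T (le_trans hm'2 hm2) (Or.inl hm'3)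
  · intro f hf
    rcases hf with (hf | hf) | hf
    · exact Qsub hf
    · exact Xsub hf
    · exact Ysub hf

lemma disjQX (n : ℕ) (b : ℤ × ℤ) : Disjoint (Qset n b) (Xset n b) := by
  rw [Set.disjoint_left]
  rintro f hfQ ⟨_, k, hkn, hkx, _⟩
  have := (hfQ.2.2.2.1 k hkn).1
  omega

lemma disjQY (n : ℕ) (b : ℤ × ℤ) : Disjoint (Qset n b) (Yset n b) := by
  rw [Set.disjoint_left]
  rintro f hfQ ⟨_, k, hkn, hky, _⟩
  have := (hfQ.2.2.2.1 k hkn).2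
  omega

lemma disjXY (n : ℕ) (b : ℤ × ℤ) : Disjoint (Xset n b) (Yset n b) := by
  rw [Set.disjoint_left]
  rintro f ⟨_, k1, hk1n, hk1x, hk1y⟩ ⟨_, k2, hk2n, hk2y, hk2x⟩
  rcases le_total k1 k2 with h | h
  · have := hk1y k2 h hk2n
    omega
  · have := hk2x k1 h hk1n
    omega

lemma walk_bound {n : ℕ} {R b} {f : ℕ → ℤ × ℤ} (hf : NatWalk n R b f) :
    ∀ k, k ≤ n → -(k:ℤ) ≤ (f k).1 ∧ (f k).1 ≤ k ∧ -(k:ℤ) ≤ (f k).2 ∧ (f k).2 ≤ k := by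
  intro k
  induction k with
  | zero =>
    intro _
    rw [hf.1]
    norm_num
  | succ k ih =>
    intro hk
    have h1 := ih (by omega)
    have hx := xstep hf k (by omega)
    have hy := ystep hf k (by omega)
    push_cast
    omega

lemma Aset_finite (n : ℕ) (b : ℤ × ℤ) : (Aset n b).Finite := by
  classical
  set S : Set (Fin (n+1) → ℤ × ℤ) :=
    Set.univ.pi (fun _ => (Set.Icc (-(n:ℤ)) n) ×ˢ (Set.Icc (-(n:ℤ)) n)) with hS
  have hSfin : S.Finite :=
    Set.Finite.pi (fun _ => (Set.finite_Icc _ _).prod (Set.finite_Icc _ _))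
  set ρ : (ℕ → ℤ × ℤ) → (Fin (n+1) → ℤ × ℤ) := fun f k => f k with hρ
  have himg : (ρ '' Aset n b).Finite := by
    apply hSfin.subset
    rintro g ⟨f, hf, rfl⟩
    intro k _
    simp only [hρ]
    have hb := walk_bound hf k.val (by omega)
    have hkn : (k : ℤ) ≤ (n : ℤ) := by
      have := k.isLt
      omega
    refine ⟨?_, ?_⟩ <;> simp only [Set.mem_Icc] <;> constructor <;> omega
  have hinj : Set.InjOn ρ (Aset n b) := by
    intro f hf g hg hfg
    funext k
    rcases le_or_gt k n with hk | hk
    · exact congrFun hfg ⟨k, by omega⟩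
    · rw [hf.2.2.2.2 k (by omega), hg.2.2.2.2 k (by omega)]
      exact congrFun hfg ⟨n, by omega⟩
  exact Set.Finite.of_finite_image himg hinj

lemma reflX_mem_A {n : ℕ} {i j : ℤ} (hi : 0 ≤ i) {f : ℕ → ℤ × ℤ}
    (hf : f ∈ Xset n (i, j)) : reflX n f ∈ Aset n (-i - 2, j) := by
  obtain ⟨hwalk, k0, hk0n, hk0x, hk0y⟩ := hf
  obtain ⟨h0, hn, hs, hr, hfr⟩ := hwalk
  have hwalk : NatWalk n coneC (i,j) f := ⟨h0, hn, hs, hr, hfr⟩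
  have hT : (f (Tx n f)).1 = -1 := Tx_spec hk0n hk0x
  have hk0T : k0 ≤ Tx n f := Tx_le_of hk0n hk0x
  have hTn : Tx n f ≤ n := Nat.findGreatest_le n
  have hxn : (f n).1 = i := by rw [hn]
  have hTltn : Tx n f < n := by
    rcases eq_or_lt_of_le hTn with h | h
    · rw [h] at hT; omega
    · exact h
  refine ⟨?_, ?_, reflX_steps hwalk hT, ?_, ?_⟩
  · rw [reflX_le (Nat.zero_le _), h0]
  · rw [reflX_ge hT (le_of_lt hTltn), hn]
    show ((-2 - i, j) : ℤ × ℤ) = (-i - 2, j)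
    rw [show (-2 - i : ℤ) = -i - 2 from by ring]
  · intro k hk
    rcases le_or_gt k (Tx n f) with h | h
    · rw [reflX_le h]
      exact hr k hk
    · rw [reflX_ge hT (le_of_lt h)]
      exact Or.inr (hk0y k (by omega) hk)
  · intro k hk
    rw [reflX_ge hT (by omega), reflX_ge hT (by omega), hfr k hk]

lemma reflX_mem_X {n : ℕ} {i j : ℤ} (hi : 0 ≤ i) {f : ℕ → ℤ × ℤ}
    (hf : f ∈ Aset n (-i - 2, j)) : reflX n f ∈ Xset n (i, j) := by
  obtain ⟨h0, hn, hs, hr, hfr⟩ := hf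
  have hwalk : NatWalk n coneC (-i-2,j) f := ⟨h0, hn, hs, hr, hfr⟩
  have hx0 : (f 0).1 = 0 := by rw [h0]
  have hxn : (f n).1 = -i - 2 := by rw [hn]
  have hex : ∃ k, k ≤ n ∧ (f k).1 = -1 := by
    obtain ⟨k, _, hk2, hk3⟩ := ivt_desc (g := fun k => (f k).1) (xstep hwalk) (Nat.zero_le n) le_rfl
      (show (-1:ℤ) ≤ (f 0).1 by omega) (show (f n).1 ≤ -1 by omega)
    exact ⟨k, hk2, hk3⟩
  obtain ⟨k0, hk0n, hk0x⟩ := hex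
  have hT : (f (Tx n f)).1 = -1 := Tx_spec hk0n hk0x
  have hTn : Tx n f ≤ n := Nat.findGreatest_le n
  have hTltn : Tx n f < n := by
    rcases eq_or_lt_of_le hTn with h | h
    · rw [h] at hT; omega
    · exact h
  have hafter : ∀ m, Tx n f < m → m ≤ n → (f m).1 ≤ -2 := by
    intro m h1 h2
    have hne : ¬ ((f m).1 = -1) := Tx_greatest h1 h2
    by_contra h
    have hge : 0 ≤ (f m).1 := by omega
    obtain ⟨m', hm'1, hm'2, hm'3⟩ := ivt_desc (g := fun k => (f k).1) (xstep hwalk) h2 le_rfl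
      (show (-1:ℤ) ≤ (f m).1 by omega) (show (f n).1 ≤ -1 by omega)
    exact Tx_greatest (show Tx n f < m' by omega) hm'2 hm'3
  have hy : ∀ m, Tx n f ≤ m → m ≤ n → 0 ≤ (f m).2 := by
    intro m h1 h2
    rcases eq_or_lt_of_le h1 with h | h
    · rcases hr m h2 with hc | hc
      · rw [← h] at hc; omega
      · exact hc
    · rcases hr m h2 with hc | hc
      · have := hafter m h h2; omega
      · exact hc
  refine ⟨⟨?_, ?_, reflX_steps hwalk hT, ?_, ?_⟩, Tx n f, hTn, ?_, ?_⟩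
  · rw [reflX_le (Nat.zero_le _), h0]
  · rw [reflX_ge hT (le_of_lt hTltn), hn]
    show ((-2 - (-i - 2), j) : ℤ × ℤ) = (i, j)
    rw [show (-2 - (-i - 2) : ℤ) = i from by ring]
  · intro k hk
    rcases le_or_gt k (Tx n f) with h | h
    · rw [reflX_le h]
      exact hr k hk
    · rw [reflX_ge hT (le_of_lt h)]
      left
      have := hafter k h hk
      show (0:ℤ) ≤ -2 - (f k).1
      omega
  · intro k hk
    rw [reflX_ge hT (by omega), reflX_ge hT (by omega), hfr k hk]
  · rw [reflX_le le_rfl]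
    exact hT
  · intro m hm1 hm2
    rw [reflX_snd]
    exact hy m hm1 hm2

lemma ncard_X (n : ℕ) (i j : ℤ) (hi : 0 ≤ i) :
    (Xset n (i, j)).ncard = (Aset n (-i - 2, j)).ncard := by
  have himg : reflX n '' Xset n (i, j) = Aset n (-i - 2, j) := by
    ext g
    constructor
    · rintro ⟨f, hf, rfl⟩
      exact reflX_mem_A hi hf
    · intro hg
      exact ⟨reflX n g, reflX_mem_X hi hg, reflX_involutive n g⟩
  rw [← himg, Set.ncard_image_of_injective _ (reflX_involutive n).injective]

def swapF (f : ℕ → ℤ × ℤ) : ℕ → ℤ × ℤ := fun k => ((f k).2, (f k).1)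

lemma swapF_involutive : Function.Involutive swapF := by
  intro f
  funext k
  rfl

lemma swap_memA {n : ℕ} {a b : ℤ} {f : ℕ → ℤ × ℤ} (hf : f ∈ Aset n (a, b)) :
    swapF f ∈ Aset n (b, a) := by
  obtain ⟨h0, hn, hs, hr, hfr⟩ := hf
  refine ⟨?_, ?_, ?_, ?_, ?_⟩
  · show ((f 0).2, (f 0).1) = ((0:ℤ), (0:ℤ))
    rw [h0]
  · show ((f n).2, (f n).1) = (b, a)
    rw [hn]
  · intro k hk
    rw [diag_mem_iff]
    have hx := xstep ⟨h0, hn, hs, hr, hfr⟩ k hk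
    have hy := ystep ⟨h0, hn, hs, hr, hfr⟩ k hk
    constructor
    · show ((swapF f (k+1) - swapF f k).1 = 1 ∨ (swapF f (k+1) - swapF f k).1 = -1)
      simp only [swapF, Prod.fst_sub]
      omega
    · show ((swapF f (k+1) - swapF f k).2 = 1 ∨ (swapF f (k+1) - swapF f k).2 = -1)
      simp only [swapF, Prod.snd_sub]
      omega
  · intro k hk
    rcases hr k hk with h | h
    · exact Or.inr h
    · exact Or.inl h
  · intro k hk
    show ((f k).2, (f k).1) = ((f n).2, (f n).1)
    rw [hfr k hk]

lemma swap_memYX {n : ℕ} {a b : ℤ} {f : ℕ → ℤ × ℤ} (hf : f ∈ Yset n (a, b)) :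
    swapF f ∈ Xset n (b, a) := by
  obtain ⟨hw, k, hkn, hky, hkx⟩ := hf
  exact ⟨swap_memA hw, k, hkn, hky, hkx⟩

lemma swap_memXY {n : ℕ} {a b : ℤ} {f : ℕ → ℤ × ℤ} (hf : f ∈ Xset n (a, b)) :
    swapF f ∈ Yset n (b, a) := by
  obtain ⟨hw, k, hkn, hkx, hky⟩ := hf
  exact ⟨swap_memA hw, k, hkn, hkx, hky⟩

lemma ncard_swap_A (n : ℕ) (a b : ℤ) :
    (Aset n (a, b)).ncard = (Aset n (b, a)).ncard := by
  have himg : swapF '' Aset n (a, b) = Aset n (b, a) := by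
    ext g
    constructor
    · rintro ⟨f, hf, rfl⟩
      exact swap_memA hf
    · intro hg
      exact ⟨swapF g, swap_memA hg, swapF_involutive g⟩
  rw [← himg, Set.ncard_image_of_injective _ swapF_involutive.injective]

lemma ncard_Y (n : ℕ) (i j : ℤ) (hj : 0 ≤ j) :
    (Yset n (i, j)).ncard = (Aset n (i, -j - 2)).ncard := by
  have himg : swapF '' Yset n (i, j) = Xset n (j, i) := by
    ext g
    constructor
    · rintro ⟨f, hf, rfl⟩
      exact swap_memYX hf
    · intro hg
      exact ⟨swapF g, swap_memXY hg, swapF_involutive g⟩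
  have h1 : (Yset n (i, j)).ncard = (Xset n (j, i)).ncard := by
    rw [← himg, Set.ncard_image_of_injective _ swapF_involutive.injective]
  rw [h1, ncard_X n j i hj, ncard_swap_A]

end Main

end DiagRefl

theorem diag_threeQuadrant_reflection_identity (i j : ℤ) (hi : 0 ≤ i) (hj : 0 ≤ j) (n : ℕ) :
    walkCount diagSteps coneC (0, 0) (i, j) n =
      walkCount diagSteps quadQ (0, 0) (i, j) n +
        walkCount diagSteps coneC (0, 0) (-i - 2, j) n +
        walkCount diagSteps coneC (0, 0) (i, -j - 2) n := by
  open DiagRefl in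
  rw [walkCount_eq_ncard, walkCount_eq_ncard, walkCount_eq_ncard, walkCount_eq_ncard]
  show (Aset n (i,j)).ncard = (Qset n (i,j)).ncard + (Aset n (-i-2,j)).ncard +
    (Aset n (i,-j-2)).ncard
  have hAfin := Aset_finite n (i, j)
  have hQfin : (Qset n (i,j)).Finite := hAfin.subset Qsub
  have hXfin : (Xset n (i,j)).Finite := hAfin.subset Xsub
  have hYfin : (Yset n (i,j)).Finite := hAfin.subset Ysub
  rw [cover n (i, j)]
  rw [Set.ncard_union_eq (Set.disjoint_union_left.mpr ⟨disjQY n (i,j), disjXY n (i,j)⟩)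
      (hQfin.union hXfin) hYfin,
    Set.ncard_union_eq (disjQX n (i,j)) hQfin hXfin]
  rw [ncard_X n i j hi, ncard_Y n i j hj]
end

section
/- For all integers i ≥ 0, j ≥ 0 and all n ≥ 0, let c_{i,j}(n) denote the number of square-lattice walks of length n from (−1,0) to (i,j) confined to the three-quadrant cone C. Then c_{i,j}(n) = c_{−i−2,j}(n) + c_{i,−j−2}(n). -/
namespace TQ

lemma mem_squareSteps_iff {d : ℤ × ℤ} :
    d ∈ squareSteps ↔ d = (1,0) ∨ d = (-1,0) ∨ d = (0,1) ∨ d = (0,-1) := by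
  simp [squareSteps]

def rx (p : ℤ × ℤ) : ℤ × ℤ := (-2 - p.1, p.2)
def ry (p : ℤ × ℤ) : ℤ × ℤ := (p.1, -2 - p.2)

lemma rx_step {p q : ℤ × ℤ} (h : p - q ∈ squareSteps) : rx p - rx q ∈ squareSteps := by
  rw [mem_squareSteps_iff] at h ⊢
  rcases h with h|h|h|h <;> simp [Prod.ext_iff, rx] at * <;> omega

lemma ry_step {p q : ℤ × ℤ} (h : p - q ∈ squareSteps) : ry p - ry q ∈ squareSteps := by
  rw [mem_squareSteps_iff] at h ⊢
  rcases h with h|h|h|h <;> simp [Prod.ext_iff, ry] at * <;> omega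

lemma rx_rx (p : ℤ × ℤ) : rx (rx p) = p := by simp [rx]
lemma ry_ry (p : ℤ × ℤ) : ry (ry p) = p := by simp [ry]

variable {n : ℕ}

def reflAfter (r : ℤ × ℤ → ℤ × ℤ) (m : Fin (n+1)) (w : Fin (n+1) → ℤ × ℤ) :
    Fin (n+1) → ℤ × ℤ := fun k => if k ≤ m then w k else r (w k)

lemma reflAfter_of_le {r m} {w : Fin (n+1) → ℤ × ℤ} {k : Fin (n+1)} (h : k ≤ m) :
    reflAfter r m w k = w k := if_pos h

lemma reflAfter_of_gt {r m} {w : Fin (n+1) → ℤ × ℤ} {k : Fin (n+1)} (h : m < k) :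
    reflAfter r m w k = r (w k) := if_neg (not_le.mpr h)

lemma reflAfter_invol {r : ℤ × ℤ → ℤ × ℤ} (hr : ∀ p, r (r p) = p) (m) (w : Fin (n+1) → ℤ × ℤ) :
    reflAfter r m (reflAfter r m w) = w := by
  funext k
  unfold reflAfter
  by_cases h : k ≤ m <;> simp [h, hr]

lemma reflAfter_steps {r : ℤ × ℤ → ℤ × ℤ} {m : Fin (n+1)} {w : Fin (n+1) → ℤ × ℤ}
    (hr : ∀ p q, p - q ∈ squareSteps → r p - r q ∈ squareSteps)
    (hm : r (w m) = w m) (hstep : ∀ k : Fin n, w k.succ - w k.castSucc ∈ squareSteps) :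
    ∀ k : Fin n, reflAfter r m w k.succ - reflAfter r m w k.castSucc ∈ squareSteps := by
  intro k
  by_cases h1 : k.succ ≤ m
  · rw [reflAfter_of_le h1, reflAfter_of_le (le_trans (Fin.castSucc_lt_succ (i := k)).le h1)]
    exact hstep k
  · push_neg at h1
    rw [reflAfter_of_gt h1]
    by_cases h2 : k.castSucc ≤ m
    · have hcm : k.castSucc = m := by
        have h1' : m.val < k.val + 1 := by simpa [Fin.lt_def] using h1
        have h2' : k.val ≤ m.val := by simpa [Fin.le_def] using h2
        exact Fin.ext (by simpa using le_antisymm h2' (by omega))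
      rw [reflAfter_of_le h2]
      have : w k.castSucc = r (w k.castSucc) := by rw [hcm]; exact hm.symm
      rw [this]
      exact hr _ _ (hstep k)
    · push_neg at h2
      rw [reflAfter_of_gt h2]
      exact hr _ _ (hstep k)

lemma reflAfter_zero {r : ℤ × ℤ → ℤ × ℤ} {m : Fin (n+1)} (w : Fin (n+1) → ℤ × ℤ) :
    reflAfter r m w 0 = w 0 := reflAfter_of_le (Fin.zero_le m)

lemma reflAfter_last {r : ℤ × ℤ → ℤ × ℤ} {m : Fin (n+1)} (w : Fin (n+1) → ℤ × ℤ)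
    (h : m ≠ Fin.last n) : reflAfter r m w (Fin.last n) = r (w (Fin.last n)) :=
  reflAfter_of_gt (lt_of_le_of_ne (Fin.le_last m) h)

/-! ### last visit times -/

def lastP (w : Fin (n+1) → ℤ × ℤ) (g : ℤ × ℤ → ℤ) : Fin (n+1) :=
  ((Finset.univ.filter (fun k => g (w k) = -1)).max).unbotD 0

lemma lastP_spec {w : Fin (n+1) → ℤ × ℤ} {g : ℤ × ℤ → ℤ} (h : ∃ k, g (w k) = -1) :
    g (w (lastP w g)) = -1 := by
  obtain ⟨k, hk⟩ := h
  have hne : (Finset.univ.filter (fun k => g (w k) = -1)).Nonempty :=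
    ⟨k, by simp [hk]⟩
  have hmem := Finset.max'_mem _ hne
  have : lastP w g = (Finset.univ.filter (fun k => g (w k) = -1)).max' hne := by
    rw [lastP, ← Finset.coe_max' hne]
    rfl
  rw [this]
  simpa using (Finset.mem_filter.mp hmem).2

lemma le_lastP {w : Fin (n+1) → ℤ × ℤ} {g : ℤ × ℤ → ℤ} {k : Fin (n+1)}
    (hk : g (w k) = -1) : k ≤ lastP w g := by
  have hne : (Finset.univ.filter (fun k => g (w k) = -1)).Nonempty := ⟨k, by simp [hk]⟩
  have : lastP w g = (Finset.univ.filter (fun k => g (w k) = -1)).max' hne := by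
    rw [lastP, ← Finset.coe_max' hne]; rfl
  rw [this]
  exact Finset.le_max' _ _ (by simp [hk])

lemma lastP_ne {w : Fin (n+1) → ℤ × ℤ} {g : ℤ × ℤ → ℤ} {k : Fin (n+1)}
    (hk : lastP w g < k) : g (w k) ≠ -1 :=
  fun h => absurd (le_lastP h) (not_le.mpr hk)

lemma lastP_congr {w w' : Fin (n+1) → ℤ × ℤ} {g g' : ℤ × ℤ → ℤ}
    (h : ∀ k, g (w k) = -1 ↔ g' (w' k) = -1) : lastP w g = lastP w' g' := by
  unfold lastP
  congr 1
  congr 1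
  apply Finset.filter_congr
  intro k _
  simp [h k]

/-! ### discrete IVT -/

lemma ivt_nat (F : ℕ → ℤ) (hF : ∀ m, F (m+1) ≤ F m + 1) {a b : ℕ} (hab : a ≤ b)
    {c : ℤ} (h1 : F a ≤ c) (h2 : c ≤ F b) : ∃ m, a ≤ m ∧ m ≤ b ∧ F m = c := by
  classical
  set P : ℕ → Prop := fun k => a ≤ k ∧ F k ≤ c with hP
  have hPa : P a := ⟨le_rfl, h1⟩
  set m := Nat.findGreatest P b with hm'
  have hm : P m := Nat.findGreatest_spec hab hPa
  have hmb : m ≤ b := Nat.findGreatest_le b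
  rcases eq_or_lt_of_le hmb with heq | hlt
  · exact ⟨m, hm.1, hmb, le_antisymm hm.2 (heq ▸ h2)⟩
  · have hnot : ¬ P (m+1) := Nat.findGreatest_is_greatest (Nat.lt_succ_self m) (by omega)
    have h3 : ¬ F (m+1) ≤ c := fun h => hnot ⟨by omega, h⟩
    have h4 := hF m
    exact ⟨m, hm.1, by omega, by omega⟩

lemma finIVT (f : Fin (n+1) → ℤ)
    (hlip : ∀ (m : ℕ) (h : m < n),
      f ⟨m+1, by omega⟩ - f ⟨m, by omega⟩ ≤ 1 ∧ f ⟨m, by omega⟩ - f ⟨m+1, by omega⟩ ≤ 1)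
    {a b : Fin (n+1)} (hab : a ≤ b) {c : ℤ} (h1 : f a ≤ c) (h2 : c ≤ f b) :
    ∃ m, a ≤ m ∧ m ≤ b ∧ f m = c := by
  set F : ℕ → ℤ := fun m => f ⟨min m n, by omega⟩ with hF
  have hFlip : ∀ m, F (m+1) ≤ F m + 1 := by
    intro m
    by_cases h : m < n
    · have h5 := (hlip m h).1
      have e1 : min (m+1) n = m + 1 := by omega
      have e2 : min m n = m := by omega
      simp only [hF, e1, e2]
      omega
    · have e1 : min (m+1) n = n := by omega
      have e2 : min m n = n := by omega
      simp only [hF, e1, e2]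
      omega
  have hFa : F a.val ≤ c := by
    have : (⟨min a.val n, by omega⟩ : Fin (n+1)) = a := Fin.ext (by simp; omega)
    simpa only [hF, this] using h1
  have hFb : c ≤ F b.val := by
    have : (⟨min b.val n, by omega⟩ : Fin (n+1)) = b := Fin.ext (by simp; omega)
    simpa only [hF, this] using h2
  obtain ⟨m, hm1, hm2, hm3⟩ := ivt_nat F hFlip (Fin.le_def.mp hab) hFa hFb
  have hmn : m ≤ n := le_trans hm2 (by omega)
  refine ⟨⟨m, by omega⟩, by simpa [Fin.le_def] using hm1, by simpa [Fin.le_def] using hm2, ?_⟩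
  have : (⟨min m n, by omega⟩ : Fin (n+1)) = ⟨m, by omega⟩ := Fin.ext (by simp; omega)
  simpa only [hF, this] using hm3

lemma finIVT' (f : Fin (n+1) → ℤ)
    (hlip : ∀ (m : ℕ) (h : m < n),
      f ⟨m+1, by omega⟩ - f ⟨m, by omega⟩ ≤ 1 ∧ f ⟨m, by omega⟩ - f ⟨m+1, by omega⟩ ≤ 1)
    {a b : Fin (n+1)} (hab : a ≤ b) {c : ℤ} (h1 : c ≤ f a) (h2 : f b ≤ c) :
    ∃ m, a ≤ m ∧ m ≤ b ∧ f m = c := by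
  have hlip' : ∀ (m : ℕ) (h : m < n),
      (fun k => -(f k)) (⟨m+1, by omega⟩ : Fin (n+1)) - (fun k => -(f k)) ⟨m, by omega⟩ ≤ 1 ∧
      (fun k => -(f k)) (⟨m, by omega⟩ : Fin (n+1)) - (fun k => -(f k)) ⟨m+1, by omega⟩ ≤ 1 := by
    intro m h
    have h5 := hlip m h
    constructor
    · show -(f ⟨m+1, by omega⟩) - -(f ⟨m, by omega⟩) ≤ 1
      omega
    · show -(f ⟨m, by omega⟩) - -(f ⟨m+1, by omega⟩) ≤ 1
      omega
  have h1' : (fun k => -(f k)) a ≤ -c := by show -(f a) ≤ -c; omega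
  have h2' : -c ≤ (fun k => -(f k)) b := by show -c ≤ -(f b); omega
  obtain ⟨m, hm1, hm2, hm3⟩ := finIVT (fun k => -(f k)) hlip' hab h1' h2'
  have hm3' : -(f m) = -c := hm3
  exact ⟨m, hm1, hm2, by omega⟩

lemma noCrossLB (f : Fin (n+1) → ℤ)
    (hlip : ∀ (m : ℕ) (h : m < n),
      f ⟨m+1, by omega⟩ - f ⟨m, by omega⟩ ≤ 1 ∧ f ⟨m, by omega⟩ - f ⟨m+1, by omega⟩ ≤ 1)
    {c : ℤ} (hlast : c ≤ f (Fin.last n)) {k : Fin (n+1)}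
    (hk : ∀ m, k ≤ m → f m ≠ c) : c < f k := by
  by_contra h
  push_neg at h
  obtain ⟨m, hm1, _, hm3⟩ := finIVT f hlip (Fin.le_last k) h hlast
  exact hk m hm1 hm3

lemma noCrossUB (f : Fin (n+1) → ℤ)
    (hlip : ∀ (m : ℕ) (h : m < n),
      f ⟨m+1, by omega⟩ - f ⟨m, by omega⟩ ≤ 1 ∧ f ⟨m, by omega⟩ - f ⟨m+1, by omega⟩ ≤ 1)
    {c : ℤ} (hlast : f (Fin.last n) ≤ c) {k : Fin (n+1)}
    (hk : ∀ m, k ≤ m → f m ≠ c) : f k < c := by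
  by_contra h
  push_neg at h
  obtain ⟨m, hm1, _, hm3⟩ := finIVT' f hlip (Fin.le_last k) h hlast
  exact hk m hm1 hm3

/-! ### Lipschitz from steps -/

lemma lipFst {w : Fin (n+1) → ℤ × ℤ}
    (hstep : ∀ k : Fin n, w k.succ - w k.castSucc ∈ squareSteps) :
    ∀ (m : ℕ) (h : m < n),
      (w ⟨m+1, by omega⟩).1 - (w ⟨m, by omega⟩).1 ≤ 1 ∧
      (w ⟨m, by omega⟩).1 - (w ⟨m+1, by omega⟩).1 ≤ 1 := by
  intro m h
  have h5 := hstep ⟨m, h⟩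
  rw [mem_squareSteps_iff] at h5
  have e1 : (⟨m, h⟩ : Fin n).succ = (⟨m+1, by omega⟩ : Fin (n+1)) := rfl
  have e2 : (⟨m, h⟩ : Fin n).castSucc = (⟨m, by omega⟩ : Fin (n+1)) := rfl
  rw [e1, e2] at h5
  rcases h5 with h5|h5|h5|h5 <;> simp [Prod.ext_iff] at h5 <;> omega

lemma lipSnd {w : Fin (n+1) → ℤ × ℤ}
    (hstep : ∀ k : Fin n, w k.succ - w k.castSucc ∈ squareSteps) :
    ∀ (m : ℕ) (h : m < n),
      (w ⟨m+1, by omega⟩).2 - (w ⟨m, by omega⟩).2 ≤ 1 ∧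
      (w ⟨m, by omega⟩).2 - (w ⟨m+1, by omega⟩).2 ≤ 1 := by
  intro m h
  have h5 := hstep ⟨m, h⟩
  rw [mem_squareSteps_iff] at h5
  have e1 : (⟨m, h⟩ : Fin n).succ = (⟨m+1, by omega⟩ : Fin (n+1)) := rfl
  have e2 : (⟨m, h⟩ : Fin n).castSucc = (⟨m, by omega⟩ : Fin (n+1)) := rfl
  rw [e1, e2] at h5
  rcases h5 with h5|h5|h5|h5 <;> simp [Prod.ext_iff] at h5 <;> omega

/-! ### the two reflection maps on walks -/

def ΦX (w : Fin (n+1) → ℤ × ℤ) : Fin (n+1) → ℤ × ℤ :=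
  reflAfter rx (lastP w Prod.fst) w

def ΦY (w : Fin (n+1) → ℤ × ℤ) : Fin (n+1) → ℤ × ℤ :=
  reflAfter ry (lastP w Prod.snd) w

def PP (w : Fin (n+1) → ℤ × ℤ) : Prop :=
  ∃ k, lastP w Prod.fst < k ∧ (w k).2 = -1

lemma ΦX_def (w : Fin (n+1) → ℤ × ℤ) : ΦX w = reflAfter rx (lastP w Prod.fst) w := rfl
lemma ΦY_def (w : Fin (n+1) → ℤ × ℤ) : ΦY w = reflAfter ry (lastP w Prod.snd) w := rfl

lemma ΦX_snd (w : Fin (n+1) → ℤ × ℤ) (k) : (ΦX w k).2 = (w k).2 := by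
  rw [ΦX_def]; unfold reflAfter
  by_cases h : k ≤ lastP w Prod.fst <;> simp [h, rx]

lemma ΦY_fst (w : Fin (n+1) → ℤ × ℤ) (k) : (ΦY w k).1 = (w k).1 := by
  rw [ΦY_def]; unfold reflAfter
  by_cases h : k ≤ lastP w Prod.snd <;> simp [h, ry]

lemma lastP_fst_ΦX (w : Fin (n+1) → ℤ × ℤ) :
    lastP (ΦX w) Prod.fst = lastP w Prod.fst := by
  apply lastP_congr
  intro k
  by_cases h : k ≤ lastP w Prod.fst
  · rw [ΦX_def, reflAfter_of_le h]
  · push_neg at h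
    rw [ΦX_def, reflAfter_of_gt h]
    show -2 - (w k).1 = -1 ↔ _
    constructor <;> intro <;> omega

lemma lastP_snd_ΦY (w : Fin (n+1) → ℤ × ℤ) :
    lastP (ΦY w) Prod.snd = lastP w Prod.snd := by
  apply lastP_congr
  intro k
  by_cases h : k ≤ lastP w Prod.snd
  · rw [ΦY_def, reflAfter_of_le h]
  · push_neg at h
    rw [ΦY_def, reflAfter_of_gt h]
    show -2 - (w k).2 = -1 ↔ _
    constructor <;> intro <;> omega

lemma lastP_fst_ΦY (w : Fin (n+1) → ℤ × ℤ) :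
    lastP (ΦY w) Prod.fst = lastP w Prod.fst :=
  lastP_congr fun k => by rw [show Prod.fst (ΦY w k) = (ΦY w k).1 from rfl, ΦY_fst]

lemma PP_ΦX (w : Fin (n+1) → ℤ × ℤ) : PP (ΦX w) ↔ PP w := by
  unfold PP
  rw [lastP_fst_ΦX]
  exact exists_congr fun k => by rw [ΦX_snd]

lemma ΦX_invol (w : Fin (n+1) → ℤ × ℤ) : ΦX (ΦX w) = w := by
  show reflAfter rx (lastP (ΦX w) Prod.fst) (ΦX w) = w
  rw [lastP_fst_ΦX]
  exact reflAfter_invol rx_rx _ w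

lemma ΦY_invol (w : Fin (n+1) → ℤ × ℤ) : ΦY (ΦY w) = w := by
  show reflAfter ry (lastP (ΦY w) Prod.snd) (ΦY w) = w
  rw [lastP_snd_ΦY]
  exact reflAfter_invol ry_ry _ w

/-! ### validity of reflected walks -/

lemma ΦX_walk {w : Fin (n+1) → ℤ × ℤ} (hw0 : w 0 = (-1, 0))
    (hstep : ∀ k : Fin n, w k.succ - w k.castSucc ∈ squareSteps)
    (hcone : ∀ k, w k ∈ coneC)
    (hyge : ∀ k, lastP w Prod.fst < k → 0 ≤ (w k).2)
    (hlastne : (w (Fin.last n)).1 ≠ -1) :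
    ΦX w 0 = (-1, 0) ∧ ΦX w (Fin.last n) = rx (w (Fin.last n)) ∧
    (∀ k : Fin n, ΦX w k.succ - ΦX w k.castSucc ∈ squareSteps) ∧
    (∀ k, ΦX w k ∈ coneC) := by
  have hs : Prod.fst (w (lastP w Prod.fst)) = -1 := lastP_spec ⟨0, by rw [hw0]⟩
  have hfix : rx (w (lastP w Prod.fst)) = w (lastP w Prod.fst) := by
    rw [Prod.ext_iff]
    refine ⟨?_, rfl⟩
    show -2 - _ = _
    omega
  have hne : lastP w Prod.fst ≠ Fin.last n := by
    intro he
    exact hlastne (by rw [← he]; exact hs)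
  refine ⟨?_, ?_, reflAfter_steps (fun p q => rx_step) hfix hstep, ?_⟩
  · rw [ΦX_def, reflAfter_zero]; exact hw0
  · rw [ΦX_def, reflAfter_last w hne]
  · intro k
    by_cases hk : k ≤ lastP w Prod.fst
    · rw [ΦX_def, reflAfter_of_le hk]; exact hcone k
    · push_neg at hk
      rw [ΦX_def, reflAfter_of_gt hk]
      exact Or.inr (hyge k hk)

lemma ΦY_walk {w : Fin (n+1) → ℤ × ℤ} (hw0 : w 0 = (-1, 0))
    (hyne : ∃ k, Prod.snd (w k) = -1)
    (hstep : ∀ k : Fin n, w k.succ - w k.castSucc ∈ squareSteps)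
    (hcone : ∀ k, w k ∈ coneC)
    (hxge : ∀ k, lastP w Prod.snd < k → 0 ≤ (w k).1)
    (hlastne : (w (Fin.last n)).2 ≠ -1) :
    ΦY w 0 = (-1, 0) ∧ ΦY w (Fin.last n) = ry (w (Fin.last n)) ∧
    (∀ k : Fin n, ΦY w k.succ - ΦY w k.castSucc ∈ squareSteps) ∧
    (∀ k, ΦY w k ∈ coneC) := by
  have hs : Prod.snd (w (lastP w Prod.snd)) = -1 := lastP_spec hyne
  have hfix : ry (w (lastP w Prod.snd)) = w (lastP w Prod.snd) := by
    rw [Prod.ext_iff]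
    refine ⟨rfl, ?_⟩
    show -2 - _ = _
    omega
  have hne : lastP w Prod.snd ≠ Fin.last n := by
    intro he
    exact hlastne (by rw [← he]; exact hs)
  refine ⟨?_, ?_, reflAfter_steps (fun p q => ry_step) hfix hstep, ?_⟩
  · rw [ΦY_def, reflAfter_zero]; exact hw0
  · rw [ΦY_def, reflAfter_last w hne]
  · intro k
    by_cases hk : k ≤ lastP w Prod.snd
    · rw [ΦY_def, reflAfter_of_le hk]; exact hcone k
    · push_neg at hk
      rw [ΦY_def, reflAfter_of_gt hk]
      exact Or.inl (hxge k hk)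

/-! ### walks with fixed endpoints -/

def good (n : ℕ) (b : ℤ × ℤ) (w : Fin (n+1) → ℤ × ℤ) : Prop :=
  w 0 = (-1, 0) ∧ w (Fin.last n) = b ∧
    (∀ k : Fin n, w k.succ - w k.castSucc ∈ squareSteps) ∧
    (∀ k, w k ∈ coneC)

/-- L1: a walk to `(-i-2, j)` reflects to a walk to `(i, j)`, and satisfies `¬ PP`. -/
lemma L1 {i j : ℤ} (hi : 0 ≤ i) (hj : 0 ≤ j) {w : Fin (n+1) → ℤ × ℤ}
    (hw : good n (-i - 2, j) w) : good n (i, j) (ΦX w) ∧ ¬ PP w := by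
  obtain ⟨hw0, hwl, hstep, hcone⟩ := hw
  have hxlast : (w (Fin.last n)).1 = -i - 2 := by rw [hwl]
  have hxk : ∀ k, lastP w Prod.fst < k → (w k).1 ≤ -2 := by
    intro k hk
    have h8 := noCrossUB (fun k => (w k).1) (lipFst hstep) (c := -1)
      (by show (w (Fin.last n)).1 ≤ -1; omega) (k := k)
      (fun m hm => lastP_ne (lt_of_lt_of_le hk hm))
    have h9 : (w k).1 < -1 := h8
    omega
  have hyge : ∀ k, lastP w Prod.fst < k → 0 ≤ (w k).2 := by
    intro k hk
    rcases hcone k with h | h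
    · exact absurd (hxk k hk) (by omega)
    · exact h
  have hΦ := ΦX_walk hw0 hstep hcone hyge (by omega)
  refine ⟨⟨hΦ.1, ?_, hΦ.2.2.1, hΦ.2.2.2⟩, ?_⟩
  · rw [hΦ.2.1, hwl]
    rw [Prod.ext_iff]
    exact ⟨by show -2 - (-i - 2) = i; ring, rfl⟩
  · rintro ⟨k, hk1, hk2⟩
    have := hyge k hk1
    omega

/-- L3: a walk to `(i, j)` with `¬ PP` reflects to a walk to `(-i-2, j)`. -/
lemma L3 {i j : ℤ} (hi : 0 ≤ i) (hj : 0 ≤ j) {w : Fin (n+1) → ℤ × ℤ}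
    (hw : good n (i, j) w) (hP : ¬ PP w) : good n (-i - 2, j) (ΦX w) := by
  obtain ⟨hw0, hwl, hstep, hcone⟩ := hw
  have hylast : (w (Fin.last n)).2 = j := by rw [hwl]
  have hyge : ∀ k, lastP w Prod.fst < k → 0 ≤ (w k).2 := by
    intro k hk
    have h8 := noCrossLB (fun k => (w k).2) (lipSnd hstep) (c := -1)
      (by show (-1:ℤ) ≤ (w (Fin.last n)).2; omega) (k := k)
      (fun m hm hy => hP ⟨m, lt_of_lt_of_le hk hm, hy⟩)
    have h9 : (-1:ℤ) < (w k).2 := h8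
    omega
  have hΦ := ΦX_walk hw0 hstep hcone hyge (by rw [hwl]; show i ≠ -1; omega)
  refine ⟨hΦ.1, ?_, hΦ.2.2.1, hΦ.2.2.2⟩
  rw [hΦ.2.1, hwl]
  rw [Prod.ext_iff]
  exact ⟨by show -2 - i = -i - 2; ring, rfl⟩

/-- L2: a walk to `(i, -j-2)` reflects to a walk to `(i, j)` satisfying `PP`. -/
lemma L2 {i j : ℤ} (hi : 0 ≤ i) (hj : 0 ≤ j) {w : Fin (n+1) → ℤ × ℤ}
    (hw : good n (i, -j - 2) w) : good n (i, j) (ΦY w) ∧ PP (ΦY w) := by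
  obtain ⟨hw0, hwl, hstep, hcone⟩ := hw
  have hylast : (w (Fin.last n)).2 = -j - 2 := by rw [hwl]
  have hy0 : (w 0).2 = 0 := by rw [hw0]
  have hyne : ∃ k, Prod.snd (w k) = -1 := by
    obtain ⟨m, _, _, hm⟩ := finIVT' (fun k => (w k).2) (lipSnd hstep)
      (Fin.zero_le (Fin.last n)) (c := -1)
      (by show (-1:ℤ) ≤ (w 0).2; omega) (by show (w (Fin.last n)).2 ≤ -1; omega)
    exact ⟨m, hm⟩
  have hyk : ∀ k, lastP w Prod.snd < k → (w k).2 ≤ -2 := by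
    intro k hk
    have h8 := noCrossUB (fun k => (w k).2) (lipSnd hstep) (c := -1)
      (by show (w (Fin.last n)).2 ≤ -1; omega) (k := k)
      (fun m hm => lastP_ne (lt_of_lt_of_le hk hm))
    have h9 : (w k).2 < -1 := h8
    omega
  have hxge : ∀ k, lastP w Prod.snd < k → 0 ≤ (w k).1 := by
    intro k hk
    rcases hcone k with h | h
    · exact h
    · exact absurd (hyk k hk) (by omega)
  have hΦ := ΦY_walk hw0 hyne hstep hcone hxge (by omega)
  have hts : lastP w Prod.fst < lastP w Prod.snd := by
    have hsx : Prod.fst (w (lastP w Prod.fst)) = -1 := lastP_spec ⟨0, by rw [hw0]⟩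
    have hty : Prod.snd (w (lastP w Prod.snd)) = -1 := lastP_spec hyne
    rcases lt_trichotomy (lastP w Prod.fst) (lastP w Prod.snd) with h | h | h
    · exact h
    · exfalso
      rcases hcone (lastP w Prod.snd) with hc | hc
      · rw [← h] at hc; revert hc; show ¬ (0 ≤ Prod.fst _); omega
      · revert hc; show ¬ (0 ≤ Prod.snd _); omega
    · exact absurd (hxge _ h) (by omega)
  refine ⟨⟨hΦ.1, ?_, hΦ.2.2.1, hΦ.2.2.2⟩, ?_⟩
  · rw [hΦ.2.1, hwl]
    rw [Prod.ext_iff]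
    exact ⟨rfl, by show -2 - (-j - 2) = j; ring⟩
  · refine ⟨lastP w Prod.snd, ?_, ?_⟩
    · rw [lastP_fst_ΦY]; exact hts
    · rw [ΦY_def, reflAfter_of_le (le_refl _)]
      exact lastP_spec hyne

/-- L4: a walk to `(i, j)` with `PP` reflects to a walk to `(i, -j-2)`. -/
lemma L4 {i j : ℤ} (hi : 0 ≤ i) (hj : 0 ≤ j) {w : Fin (n+1) → ℤ × ℤ}
    (hw : good n (i, j) w) (hP : PP w) : good n (i, -j - 2) (ΦY w) := by
  obtain ⟨hw0, hwl, hstep, hcone⟩ := hw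
  obtain ⟨k0, hk0s, hk0y⟩ := hP
  have hxlast : (w (Fin.last n)).1 = i := by rw [hwl]
  have hyne : ∃ k, Prod.snd (w k) = -1 := ⟨k0, hk0y⟩
  have hts : lastP w Prod.fst < lastP w Prod.snd :=
    lt_of_lt_of_le hk0s (le_lastP hk0y)
  have hxge : ∀ k, lastP w Prod.snd < k → 0 ≤ (w k).1 := by
    intro k hk
    have h8 := noCrossLB (fun k => (w k).1) (lipFst hstep) (c := -1)
      (by show (-1:ℤ) ≤ (w (Fin.last n)).1; omega) (k := k)
      (fun m hm => lastP_ne (lt_trans hts (lt_of_lt_of_le hk hm)))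
    have h9 : (-1:ℤ) < (w k).1 := h8
    omega
  have hΦ := ΦY_walk hw0 hyne hstep hcone hxge (by rw [hwl]; show j ≠ -1; omega)
  refine ⟨hΦ.1, ?_, hΦ.2.2.1, hΦ.2.2.2⟩
  rw [hΦ.2.1, hwl]
  rw [Prod.ext_iff]
  exact ⟨rfl, by show -2 - j = -j - 2; ring⟩

def WalkT (n : ℕ) (b : ℤ × ℤ) := {w : Fin (n+1) → ℤ × ℤ // good n b w}

instance WalkT.finite (n : ℕ) (b : ℤ × ℤ) : Finite (WalkT n b) := by
  have hfin : squareSteps.Finite := by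
    show ({(1,0), (-1,0), (0,1), (0,-1)} : Set (ℤ × ℤ)).Finite
    exact (Set.finite_singleton _).insert _ |>.insert _ |>.insert _
  have : Finite ↥squareSteps := hfin.to_subtype
  apply Finite.of_injective
    (f := fun w : WalkT n b => fun k : Fin n =>
      (⟨w.1 k.succ - w.1 k.castSucc, w.2.2.2.1 k⟩ : ↥squareSteps))
  intro w w' h
  apply Subtype.ext
  funext k
  induction k using Fin.induction with
  | zero => rw [w.2.1, w'.2.1]
  | succ k ih =>
      have hk : w.1 k.succ - w.1 k.castSucc = w'.1 k.succ - w'.1 k.castSucc :=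
        congrArg Subtype.val (congrFun h k)
      have e1 : w.1 k.succ = w.1 k.succ - w.1 k.castSucc + w.1 k.castSucc := by ring
      rw [e1, hk, ih]
      ring

noncomputable def theEquiv (i j : ℤ) (hi : 0 ≤ i) (hj : 0 ≤ j) (n : ℕ) :
    WalkT n (-i - 2, j) ⊕ WalkT n (i, -j - 2) ≃ WalkT n (i, j) := by
  classical
  exact
  { toFun := fun u =>
      match u with
      | .inl u => ⟨ΦX u.1, (L1 hi hj u.2).1⟩
      | .inr u => ⟨ΦY u.1, (L2 hi hj u.2).1⟩
    invFun := fun v =>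
      if h : PP v.1 then .inr ⟨ΦY v.1, L4 hi hj v.2 h⟩
      else .inl ⟨ΦX v.1, L3 hi hj v.2 h⟩
    left_inv := by
      rintro (u | u)
      · have hnp : ¬ PP (ΦX u.1) := fun hp => (L1 hi hj u.2).2 ((PP_ΦX u.1).mp hp)
        simp only [dif_neg hnp]
        exact congrArg Sum.inl (Subtype.ext (ΦX_invol u.1))
      · have hp : PP (ΦY u.1) := (L2 hi hj u.2).2
        simp only [dif_pos hp]
        exact congrArg Sum.inr (Subtype.ext (ΦY_invol u.1))
    right_inv := by
      intro v
      by_cases h : PP v.1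
      · simp only [dif_pos h]
        exact Subtype.ext (ΦY_invol v.1)
      · simp only [dif_neg h]
        exact Subtype.ext (ΦX_invol v.1) }

end TQ

theorem square_threeQuadrant_shifted_reflection_identity
    (i j : ℤ) (hi : 0 ≤ i) (hj : 0 ≤ j) (n : ℕ) :
    walkCount squareSteps coneC (-1, 0) (i, j) n =
      walkCount squareSteps coneC (-1, 0) (-i - 2, j) n +
        walkCount squareSteps coneC (-1, 0) (i, -j - 2) n := by
  have h1 : walkCount squareSteps coneC (-1, 0) (i, j) n = Nat.card (TQ.WalkT n (i, j)) := rfl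
  have h2 : walkCount squareSteps coneC (-1, 0) (-i - 2, j) n
      = Nat.card (TQ.WalkT n (-i - 2, j)) := rfl
  have h3 : walkCount squareSteps coneC (-1, 0) (i, -j - 2) n
      = Nat.card (TQ.WalkT n (i, -j - 2)) := rfl
  rw [h1, h2, h3, ← Nat.card_sum]
  exact Nat.card_congr (TQ.theEquiv i j hi hj n).symm
end

section
/- For all integers i ≥ 0, j ≥ 0 and all n ≥ 0, let c_{i,j}(n) denote the number of diagonal-lattice walks of length n from (−2,0) to (i,j) confined to the three-quadrant cone C, and let q_{i,j}(n) denote the number of diagonal-lattice walks of length n from (0,0) to (i,j) confined to the quadrant Q. Then c_{i,j}(n) + q_{i,j}(n) = c_{−i−2,j}(n) + c_{i,−j−2}(n). -/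
lemma mem_diagSteps {p : ℤ × ℤ} :
    p ∈ diagSteps ↔ (p.1 = 1 ∨ p.1 = -1) ∧ (p.2 = 1 ∨ p.2 = -1) := by
  obtain ⟨a, b⟩ := p
  simp [diagSteps, Prod.ext_iff]
  omega

/-- Discrete intermediate value theorem, upward. -/
lemma ivt_up {f : ℕ → ℤ} {n : ℕ}
    (hstep : ∀ k, k < n → f (k+1) = f k + 1 ∨ f (k+1) = f k - 1)
    {a b : ℕ} (hab : a ≤ b) (hbn : b ≤ n) {c : ℤ}
    (hfa : f a ≤ c) (hfb : c ≤ f b) : ∃ k, a ≤ k ∧ k ≤ b ∧ f k = c := by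
  have key : ∀ b, b ≤ n → ∀ a, a ≤ b → f a ≤ c → c ≤ f b →
      ∃ k, a ≤ k ∧ k ≤ b ∧ f k = c := by
    intro b
    induction b with
    | zero =>
      intro _ a ha h1 h2
      obtain rfl : a = 0 := by omega
      exact ⟨0, le_refl _, le_refl _, by omega⟩
    | succ b ih =>
      intro hbn a ha h1 h2
      rcases Nat.lt_or_ge a (b+1) with h | h
      · rcases le_or_gt c (f b) with h2' | h2'
        · obtain ⟨k, hk1, hk2, hk3⟩ := ih (by omega) a (by omega) h1 h2'
          exact ⟨k, hk1, by omega, hk3⟩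
        · have := hstep b (by omega)
          exact ⟨b+1, by omega, le_refl _, by omega⟩
      · obtain rfl : a = b + 1 := by omega
        exact ⟨b+1, le_refl _, le_refl _, by omega⟩
  exact key b hbn a hab hfa hfb

/-- Discrete intermediate value theorem, downward. -/
lemma ivt_down {f : ℕ → ℤ} {n : ℕ}
    (hstep : ∀ k, k < n → f (k+1) = f k + 1 ∨ f (k+1) = f k - 1)
    {a b : ℕ} (hab : a ≤ b) (hbn : b ≤ n) {c : ℤ}
    (hfa : c ≤ f a) (hfb : f b ≤ c) : ∃ k, a ≤ k ∧ k ≤ b ∧ f k = c := by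
  have h := ivt_up (f := fun k => -(f k)) (n := n)
    (fun k hk => by
      rcases hstep k hk with h | h
      · exact Or.inr (by simp [h]; ring)
      · exact Or.inl (by simp [h]; ring))
    hab hbn (c := -c) (show -(f a) ≤ -c by omega) (show -c ≤ -(f b) by omega)
  obtain ⟨k, h1, h2, h3⟩ := h
  exact ⟨k, h1, h2, by simp at h3; omega⟩

lemma findGreatest_eq_of {P : ℕ → Prop} [DecidablePred P] {n s : ℕ}
    (hs : s ≤ n) (hP : P s) (hmax : ∀ k, s < k → k ≤ n → ¬ P k) :
    Nat.findGreatest P n = s := by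
  have h1 : s ≤ Nat.findGreatest P n := Nat.le_findGreatest hs hP
  rcases Nat.lt_or_ge s (Nat.findGreatest P n) with h | h
  · exact absurd (Nat.findGreatest_spec hs hP) (hmax _ h (Nat.findGreatest_le n))
  · omega

/-- Walks as functions on ℕ (constant after `n`). -/
def IsWalk (n : ℕ) (a b : ℤ × ℤ) (R : Set (ℤ × ℤ)) (w : ℕ → ℤ × ℤ) : Prop :=
  w 0 = a ∧ w n = b ∧ (∀ k, k < n → w (k+1) - w k ∈ diagSteps) ∧
    (∀ k, k ≤ n → w k ∈ R) ∧ (∀ k, n ≤ k → w k = b)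

/-- Transfer from the `Fin`-indexed definition to the ℕ-indexed one. -/
lemma walkCount_eq_s13 (R : Set (ℤ × ℤ)) (a b : ℤ × ℤ) (n : ℕ) :
    walkCount diagSteps R a b n = Nat.card {w : ℕ → ℤ × ℤ // IsWalk n a b R w} := by
  refine Nat.card_congr ?_
  refine
    { toFun := fun w => ⟨fun k => w.1 ⟨min k n, by omega⟩, ?_, ?_, ?_, ?_, ?_⟩
      invFun := fun w => ⟨fun k => w.1 k.val, ?_, ?_, ?_, ?_⟩
      left_inv := ?_
      right_inv := ?_ }
  · obtain ⟨w, h0, hl, hs, hr⟩ := w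
    simpa using h0
  · obtain ⟨w, h0, hl, hs, hr⟩ := w
    simpa [Fin.last] using hl
  · obtain ⟨w, h0, hl, hs, hr⟩ := w
    intro k hk
    have := hs ⟨k, hk⟩
    simpa [Fin.succ, Fin.castSucc, Fin.castAdd, Fin.castLE,
      Nat.min_eq_left (by omega : k + 1 ≤ n), Nat.min_eq_left (by omega : k ≤ n)] using this
  · obtain ⟨w, h0, hl, hs, hr⟩ := w
    intro k hk
    simpa [Nat.min_eq_left hk] using hr ⟨k, by omega⟩
  · obtain ⟨w, h0, hl, hs, hr⟩ := w
    intro k hk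
    simpa [Nat.min_eq_right hk, Fin.last] using hl
  · obtain ⟨w, h0, hl, hs, hr, ht⟩ := w
    simpa using h0
  · obtain ⟨w, h0, hl, hs, hr, ht⟩ := w
    simpa [Fin.last] using hl
  · obtain ⟨w, h0, hl, hs, hr, ht⟩ := w
    intro k
    have := hs k.val k.isLt
    simpa [Fin.succ, Fin.castSucc, Fin.castAdd, Fin.castLE] using this
  · obtain ⟨w, h0, hl, hs, hr, ht⟩ := w
    intro k
    exact hr k.val (by omega)
  · intro w
    apply Subtype.ext
    funext k
    simp [Nat.min_eq_left (by omega : k.val ≤ n)]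
  · intro w
    apply Subtype.ext
    funext k
    obtain ⟨w, h0, hl, hs, hr, ht⟩ := w
    rcases le_or_gt k n with h | h
    · simp [Nat.min_eq_left h]
    · simp only [Nat.min_eq_right (le_of_lt h)]
      rw [ht k (le_of_lt h), ht n (le_refl n)]

lemma diagSteps_finite : diagSteps.Finite := by
  unfold diagSteps
  exact (((Set.finite_singleton _).insert _).insert _).insert _

/-- Walk sets are finite. -/
lemma isWalk_finite (n : ℕ) (a b : ℤ × ℤ) (R : Set (ℤ × ℤ)) :
    Finite {w : ℕ → ℤ × ℤ // IsWalk n a b R w} := by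
  haveI : Finite ↥diagSteps := diagSteps_finite.to_subtype
  have key : ∀ w w' : {w : ℕ → ℤ × ℤ // IsWalk n a b R w},
      (∀ k : Fin n, w.1 (k.val+1) - w.1 k.val = w'.1 (k.val+1) - w'.1 k.val) → w = w' := by
    intro ⟨w, h0, hl, hs, hr, ht⟩ ⟨w', h0', hl', hs', hr', ht'⟩ h
    apply Subtype.ext
    funext k
    simp only at h ⊢
    induction k with
    | zero => rw [h0, h0']
    | succ k ih =>
      rcases Nat.lt_or_ge k n with hk | hk
      · have := h ⟨k, hk⟩
        simp only at this
        have : w (k+1) - w k = w' (k+1) - w' k := this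
        rw [ih] at this
        · exact by
            have := congrArg (· + w' k) this
            simpa using this
      · rw [ht (k+1) (by omega), ht' (k+1) (by omega)]
  refine Finite.of_injective (fun w => fun k : Fin n =>
    (⟨w.1 (k.val+1) - w.1 k.val, w.2.2.2.1 k.val k.isLt⟩ : ↥diagSteps)) ?_
  intro w w' h
  apply key
  intro k
  have := congrFun h k
  simpa [Subtype.ext_iff] using this

lemma stepX {n : ℕ} {a b : ℤ × ℤ} {R : Set (ℤ × ℤ)} {w : ℕ → ℤ × ℤ}
    (h : IsWalk n a b R w) :
    ∀ k, k < n → (w (k+1)).1 = (w k).1 + 1 ∨ (w (k+1)).1 = (w k).1 - 1 := by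
  intro k hk
  have := (mem_diagSteps.mp (h.2.2.1 k hk)).1
  simp [Prod.fst_sub] at this
  omega

lemma stepY {n : ℕ} {a b : ℤ × ℤ} {R : Set (ℤ × ℤ)} {w : ℕ → ℤ × ℤ}
    (h : IsWalk n a b R w) :
    ∀ k, k < n → (w (k+1)).2 = (w k).2 + 1 ∨ (w (k+1)).2 = (w k).2 - 1 := by
  intro k hk
  have := (mem_diagSteps.mp (h.2.2.1 k hk)).2
  simp [Prod.snd_sub] at this
  omega

/-- After the last visit of `-1`, a walk ending `≥ 0` stays `≥ 0`. -/
lemma after_last_up {f : ℕ → ℤ} {n : ℕ}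
    (hstep : ∀ k, k < n → f (k+1) = f k + 1 ∨ f (k+1) = f k - 1)
    (hend : 0 ≤ f n) :
    ∀ m, m ≤ n → Nat.findGreatest (fun k => f k = -1) n < m → 0 ≤ f m := by
  intro m hm hgt
  by_contra hneg
  push_neg at hneg
  have hne : ¬ (f m = -1) := Nat.findGreatest_is_greatest hgt hm
  have hle : f m ≤ -1 := by omega
  obtain ⟨k, hk1, hk2, hk3⟩ := ivt_up hstep hm (le_refl n) (c := -1) hle (by omega)
  exact Nat.findGreatest_is_greatest (P := fun k => f k = -1) (by omega) hk2 hk3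

/-- After the last visit of `-1`, a walk ending `≤ -2` stays `≤ -2`. -/
lemma after_last_down {f : ℕ → ℤ} {n : ℕ}
    (hstep : ∀ k, k < n → f (k+1) = f k + 1 ∨ f (k+1) = f k - 1)
    (hend : f n ≤ -2) :
    ∀ m, m ≤ n → Nat.findGreatest (fun k => f k = -1) n < m → f m ≤ -2 := by
  intro m hm hgt
  by_contra hneg
  push_neg at hneg
  have hne : ¬ (f m = -1) := Nat.findGreatest_is_greatest hgt hm
  have hge : -1 ≤ f m := by omega
  obtain ⟨k, hk1, hk2, hk3⟩ := ivt_down hstep hm (le_refl n) (c := -1) hge (by omega)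
  exact Nat.findGreatest_is_greatest (P := fun k => f k = -1) (by omega) hk2 hk3

/-- Last time the first coordinate equals `-1`. -/
noncomputable def tX (n : ℕ) (w : ℕ → ℤ × ℤ) : ℕ :=
  Nat.findGreatest (fun k => (w k).1 = -1) n

/-- Last time the second coordinate equals `-1`. -/
noncomputable def tY (n : ℕ) (w : ℕ → ℤ × ℤ) : ℕ :=
  Nat.findGreatest (fun k => (w k).2 = -1) n

def PA (n : ℕ) (w : ℕ → ℤ × ℤ) : Prop :=
  (∃ k, k ≤ n ∧ (w k).2 = -1) ∧ ∀ m, m ≤ n → tY n w < m → 0 ≤ (w m).1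

def PB (n : ℕ) (w : ℕ → ℤ × ℤ) : Prop :=
  ∀ m, m ≤ n → tX n w < m → 0 ≤ (w m).2

section Main

variable {i j : ℤ} {n : ℕ}

lemma hitX_total {w : ℕ → ℤ × ℤ} (hw : IsWalk n (-2,0) (i,j) coneC w) (hi : 0 ≤ i) :
    ∃ k, k ≤ n ∧ (w k).1 = -1 := by
  have h0 : (w 0).1 = -2 := by rw [hw.1]
  have hn : (w n).1 = i := by rw [hw.2.1]
  obtain ⟨k, _, hk2, hk3⟩ := ivt_up (f := fun k => (w k).1) (stepX hw)
    (Nat.zero_le n) (le_refl n) (c := -1) (show (w 0).1 ≤ -1 by omega)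
    (show (-1 : ℤ) ≤ (w n).1 by omega)
  exact ⟨k, hk2, hk3⟩

lemma cover {w : ℕ → ℤ × ℤ} (hw : IsWalk n (-2,0) (i,j) coneC w)
    (hi : 0 ≤ i) (hj : 0 ≤ j) : PA n w ∨ PB n w := by
  by_cases hB : PB n w
  · exact Or.inr hB
  · left
    unfold PB at hB
    push_neg at hB
    obtain ⟨m, hm, hsm, hym⟩ := hB
    have hyn : (w n).2 = j := by rw [hw.2.1]
    obtain ⟨m', hm'1, hm'2, hm'3⟩ := ivt_up (f := fun k => (w k).2) (stepY hw)
      hm (le_refl n) (c := -1) (show (w m).2 ≤ -1 by omega)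
      (show (-1 : ℤ) ≤ (w n).2 by omega)
    have hexY : ∃ k, k ≤ n ∧ (w k).2 = -1 := ⟨m', hm'2, hm'3⟩
    have htm' : m' ≤ tY n w := Nat.le_findGreatest hm'2 hm'3
    refine ⟨hexY, ?_⟩
    intro m2 hm2 hgt
    by_contra hneg
    push_neg at hneg
    have hxn : (w n).1 = i := by rw [hw.2.1]
    obtain ⟨k, hk1, hk2, hk3⟩ := ivt_up (f := fun k => (w k).1) (stepX hw)
      hm2 (le_refl n) (c := -1) (show (w m2).1 ≤ -1 by omega)
      (show (-1 : ℤ) ≤ (w n).1 by omega)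
    have : k ≤ tX n w := Nat.le_findGreatest hk2 hk3
    omega

lemma disjointAB {w : ℕ → ℤ × ℤ} (hw : IsWalk n (-2,0) (i,j) coneC w)
    (hi : 0 ≤ i) : ¬ (PA n w ∧ PB n w) := by
  rintro ⟨⟨hexY, hA⟩, hB⟩
  obtain ⟨kx, hkx, hkx2⟩ := hitX_total hw hi
  obtain ⟨ky, hky, hky2⟩ := hexY
  have hsP : (w (tX n w)).1 = -1 :=
    Nat.findGreatest_spec (P := fun k => (w k).1 = -1) hkx hkx2
  have htP : (w (tY n w)).2 = -1 :=
    Nat.findGreatest_spec (P := fun k => (w k).2 = -1) hky hky2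
  have hsn : tX n w ≤ n := Nat.findGreatest_le (P := fun k => (w k).1 = -1) n
  have htn : tY n w ≤ n := Nat.findGreatest_le (P := fun k => (w k).2 = -1) n
  have h1 : tX n w ≤ tY n w := by
    by_contra h
    have := hA (tX n w) hsn (by omega)
    omega
  have h2 : tY n w ≤ tX n w := by
    by_contra h
    have := hB (tY n w) htn (by omega)
    omega
  have heq : tX n w = tY n w := le_antisymm h1 h2
  have := hw.2.2.2.1 (tX n w) hsn
  simp only [coneC, Set.mem_setOf_eq] at this
  rw [heq] at this hsP
  omega

end Main

def HX (n : ℕ) (w : ℕ → ℤ × ℤ) : Prop := ∃ k, k ≤ n ∧ (w k).1 = -1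

noncomputable def reflX (s : ℕ) (w : ℕ → ℤ × ℤ) : ℕ → ℤ × ℤ :=
  fun k => if k ≤ s then w k else (-2 - (w k).1, (w k).2)

noncomputable def reflY (t : ℕ) (w : ℕ → ℤ × ℤ) : ℕ → ℤ × ℤ :=
  fun k => if k ≤ t then w k else ((w k).1, -2 - (w k).2)

noncomputable def flipX (w : ℕ → ℤ × ℤ) : ℕ → ℤ × ℤ :=
  fun k => (-2 - (w k).1, (w k).2)

lemma reflX_reflX (s : ℕ) (w : ℕ → ℤ × ℤ) : reflX s (reflX s w) = w := by
  funext k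
  by_cases h : k ≤ s <;> simp [reflX, h]

lemma reflY_reflY (t : ℕ) (w : ℕ → ℤ × ℤ) : reflY t (reflY t w) = w := by
  funext k
  by_cases h : k ≤ t <;> simp [reflY, h]

lemma flipX_flipX (w : ℕ → ℤ × ℤ) : flipX (flipX w) = w := by
  funext k
  simp [flipX]

section Refl

variable {i j : ℤ} {n : ℕ}

lemma reflX_forward {w : ℕ → ℤ × ℤ} (hi : 0 ≤ i) (hj : 0 ≤ j)
    (hw : IsWalk n (-2,0) (i,j) coneC w) (hB : PB n w) :
    IsWalk n (-2,0) (-i-2,j) coneC (reflX (tX n w) w) ∧ HX n (reflX (tX n w) w) ∧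
      tX n (reflX (tX n w) w) = tX n w := by
  have hx0 : (w 0).1 = -2 := by rw [hw.1]
  have hxn : (w n).1 = i := by rw [hw.2.1]
  have hyn : (w n).2 = j := by rw [hw.2.1]
  obtain ⟨kx, hkx1, hkx2⟩ := hitX_total hw hi
  set s := tX n w with hs_def
  have hsP : (w s).1 = -1 := Nat.findGreatest_spec (P := fun k => (w k).1 = -1) hkx1 hkx2
  have hsn : s ≤ n := Nat.findGreatest_le n
  have hslt : s < n := lt_of_le_of_ne hsn (fun h => by rw [h] at hsP; omega)
  have hafter : ∀ m, m ≤ n → s < m → 0 ≤ (w m).1 :=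
    after_last_up (f := fun k => (w k).1) (stepX hw) (show (0:ℤ) ≤ (w n).1 by omega)
  have htX : tX n (reflX s w) = s := by
    apply findGreatest_eq_of hsn
    · show (reflX s w s).1 = -1
      simp [reflX, hsP]
    · intro k hk1 hk2
      show ¬ ((reflX s w k).1 = -1)
      have := hafter k hk2 hk1
      simp only [reflX, if_neg (by omega : ¬ k ≤ s)]
      simp
      omega
  refine ⟨⟨?_, ?_, ?_, ?_, ?_⟩, ⟨s, hsn, by simp [reflX, hsP]⟩, htX⟩
  · simp only [reflX, if_pos (Nat.zero_le s)]
    exact hw.1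
  · simp only [reflX, if_neg (by omega : ¬ n ≤ s)]
    rw [Prod.ext_iff]
    constructor
    · simp [hxn]; ring
    · simp [hyn]
  · intro k hk
    have hxs := stepX hw k hk
    have hys := stepY hw k hk
    by_cases h1 : k + 1 ≤ s
    · simp only [reflX, if_pos h1, if_pos (by omega : k ≤ s)]
      exact hw.2.2.1 k hk
    · by_cases h2 : k ≤ s
      · have hkeq : k = s := by omega
        have h01 : 0 ≤ (w (k+1)).1 := hafter (k+1) (by omega) (by omega)
        have hxk : (w k).1 = -1 := by rw [hkeq]; exact hsP
        simp only [reflX, if_pos h2, if_neg h1]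
        rw [mem_diagSteps]
        simp only [Prod.fst_sub, Prod.snd_sub]
        omega
      · simp only [reflX, if_neg h1, if_neg h2]
        rw [mem_diagSteps]
        have := hw.2.2.1 k hk
        rw [mem_diagSteps] at this
        simp only [Prod.fst_sub, Prod.snd_sub] at this ⊢
        simp at this ⊢
        omega
  · intro k hk
    by_cases h : k ≤ s
    · simp only [reflX, if_pos h]
      exact hw.2.2.2.1 k hk
    · simp only [reflX, if_neg h]
      right
      exact hB k hk (by omega)
  · intro k hk
    simp only [reflX, if_neg (by omega : ¬ k ≤ s)]
    rw [hw.2.2.2.2 k hk]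
    rw [Prod.ext_iff]
    constructor
    · simp; ring
    · simp

lemma reflX_backward {w : ℕ → ℤ × ℤ} (hi : 0 ≤ i) (hj : 0 ≤ j)
    (hw : IsWalk n (-2,0) (-i-2,j) coneC w) (hH : HX n w) :
    IsWalk n (-2,0) (i,j) coneC (reflX (tX n w) w) ∧ PB n (reflX (tX n w) w) ∧
      tX n (reflX (tX n w) w) = tX n w := by
  have hx0 : (w 0).1 = -2 := by rw [hw.1]
  have hxn : (w n).1 = -i-2 := by rw [hw.2.1]
  have hyn : (w n).2 = j := by rw [hw.2.1]
  obtain ⟨kx, hkx1, hkx2⟩ := hH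
  set s := tX n w with hs_def
  have hsP : (w s).1 = -1 := Nat.findGreatest_spec (P := fun k => (w k).1 = -1) hkx1 hkx2
  have hsn : s ≤ n := Nat.findGreatest_le n
  have hslt : s < n := lt_of_le_of_ne hsn (fun h => by rw [h] at hsP; omega)
  have hafter : ∀ m, m ≤ n → s < m → (w m).1 ≤ -2 :=
    after_last_down (f := fun k => (w k).1) (stepX hw) (show (w n).1 ≤ -2 by omega)
  have hyafter : ∀ m, m ≤ n → s < m → 0 ≤ (w m).2 := by
    intro m hm hsm
    have h1 := hafter m hm hsm
    have h2 := hw.2.2.2.1 m hm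
    simp only [coneC, Set.mem_setOf_eq] at h2
    omega
  have htX : tX n (reflX s w) = s := by
    apply findGreatest_eq_of hsn
    · show (reflX s w s).1 = -1
      simp [reflX, hsP]
    · intro k hk1 hk2
      show ¬ ((reflX s w k).1 = -1)
      have := hafter k hk2 hk1
      simp only [reflX, if_neg (by omega : ¬ k ≤ s)]
      simp
      omega
  have hPB : PB n (reflX s w) := by
    rw [PB, htX]
    intro m hm hsm
    have := hyafter m hm hsm
    by_cases h : m ≤ s
    · simp only [reflX, if_pos h]; exact this
    · simp only [reflX, if_neg h]; exact this
  refine ⟨⟨?_, ?_, ?_, ?_, ?_⟩, hPB, htX⟩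
  · simp only [reflX, if_pos (Nat.zero_le s)]
    exact hw.1
  · simp only [reflX, if_neg (by omega : ¬ n ≤ s)]
    rw [Prod.ext_iff]
    constructor
    · simp [hxn]; ring
    · simp [hyn]
  · intro k hk
    have hxs := stepX hw k hk
    have hys := stepY hw k hk
    by_cases h1 : k + 1 ≤ s
    · simp only [reflX, if_pos h1, if_pos (by omega : k ≤ s)]
      exact hw.2.2.1 k hk
    · by_cases h2 : k ≤ s
      · have hkeq : k = s := by omega
        have h01 : (w (k+1)).1 ≤ -2 := hafter (k+1) (by omega) (by omega)
        have hxk : (w k).1 = -1 := by rw [hkeq]; exact hsP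
        simp only [reflX, if_pos h2, if_neg h1]
        rw [mem_diagSteps]
        simp only [Prod.fst_sub, Prod.snd_sub]
        omega
      · simp only [reflX, if_neg h1, if_neg h2]
        rw [mem_diagSteps]
        have := hw.2.2.1 k hk
        rw [mem_diagSteps] at this
        simp only [Prod.fst_sub, Prod.snd_sub] at this ⊢
        simp at this ⊢
        omega
  · intro k hk
    by_cases h : k ≤ s
    · simp only [reflX, if_pos h]
      exact hw.2.2.2.1 k hk
    · simp only [reflX, if_neg h]
      left
      have := hafter k hk (by omega)
      simp
      omega
  · intro k hk
    simp only [reflX, if_neg (by omega : ¬ k ≤ s)]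
    rw [hw.2.2.2.2 k hk]
    rw [Prod.ext_iff]
    constructor
    · simp; ring
    · simp

end Refl

section Refl2

variable {i j : ℤ} {n : ℕ}

lemma reflY_forward {w : ℕ → ℤ × ℤ} (hi : 0 ≤ i) (hj : 0 ≤ j)
    (hw : IsWalk n (-2,0) (i,j) coneC w) (hA : PA n w) :
    IsWalk n (-2,0) (i,-j-2) coneC (reflY (tY n w) w) ∧
      tY n (reflY (tY n w) w) = tY n w := by
  have hy0 : (w 0).2 = 0 := by rw [hw.1]
  have hxn : (w n).1 = i := by rw [hw.2.1]
  have hyn : (w n).2 = j := by rw [hw.2.1]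
  obtain ⟨⟨ky, hky1, hky2⟩, hxA⟩ := hA
  set t := tY n w with ht_def
  have htP : (w t).2 = -1 := Nat.findGreatest_spec (P := fun k => (w k).2 = -1) hky1 hky2
  have htn : t ≤ n := Nat.findGreatest_le n
  have htlt : t < n := lt_of_le_of_ne htn (fun h => by rw [h] at htP; omega)
  have hafter : ∀ m, m ≤ n → t < m → 0 ≤ (w m).2 :=
    after_last_up (f := fun k => (w k).2) (stepY hw) (show (0:ℤ) ≤ (w n).2 by omega)
  have htY : tY n (reflY t w) = t := by
    apply findGreatest_eq_of htn
    · show (reflY t w t).2 = -1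
      simp [reflY, htP]
    · intro k hk1 hk2
      show ¬ ((reflY t w k).2 = -1)
      have := hafter k hk2 hk1
      simp only [reflY, if_neg (by omega : ¬ k ≤ t)]
      simp
      omega
  refine ⟨⟨?_, ?_, ?_, ?_, ?_⟩, htY⟩
  · simp only [reflY, if_pos (Nat.zero_le t)]
    exact hw.1
  · simp only [reflY, if_neg (by omega : ¬ n ≤ t)]
    rw [Prod.ext_iff]
    constructor
    · simp [hxn]
    · simp [hyn]; ring
  · intro k hk
    have hxs := stepX hw k hk
    have hys := stepY hw k hk
    by_cases h1 : k + 1 ≤ t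
    · simp only [reflY, if_pos h1, if_pos (by omega : k ≤ t)]
      exact hw.2.2.1 k hk
    · by_cases h2 : k ≤ t
      · have hkeq : k = t := by omega
        have h01 : 0 ≤ (w (k+1)).2 := hafter (k+1) (by omega) (by omega)
        have hyk : (w k).2 = -1 := by rw [hkeq]; exact htP
        simp only [reflY, if_pos h2, if_neg h1]
        rw [mem_diagSteps]
        simp only [Prod.fst_sub, Prod.snd_sub]
        omega
      · simp only [reflY, if_neg h1, if_neg h2]
        rw [mem_diagSteps]
        have := hw.2.2.1 k hk
        rw [mem_diagSteps] at this
        simp only [Prod.fst_sub, Prod.snd_sub] at this ⊢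
        simp at this ⊢
        omega
  · intro k hk
    by_cases h : k ≤ t
    · simp only [reflY, if_pos h]
      exact hw.2.2.2.1 k hk
    · simp only [reflY, if_neg h]
      left
      exact hxA k hk (by omega)
  · intro k hk
    simp only [reflY, if_neg (by omega : ¬ k ≤ t)]
    rw [hw.2.2.2.2 k hk]
    rw [Prod.ext_iff]
    constructor
    · simp
    · simp; ring

lemma reflY_backward {w : ℕ → ℤ × ℤ} (hi : 0 ≤ i) (hj : 0 ≤ j)
    (hw : IsWalk n (-2,0) (i,-j-2) coneC w) :
    IsWalk n (-2,0) (i,j) coneC (reflY (tY n w) w) ∧ PA n (reflY (tY n w) w) ∧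
      tY n (reflY (tY n w) w) = tY n w := by
  have hy0 : (w 0).2 = 0 := by rw [hw.1]
  have hxn : (w n).1 = i := by rw [hw.2.1]
  have hyn : (w n).2 = -j-2 := by rw [hw.2.1]
  obtain ⟨ky, _, hky1, hky2⟩ := ivt_down (f := fun k => (w k).2) (stepY hw)
    (Nat.zero_le n) (le_refl n) (c := -1) (show (-1:ℤ) ≤ (w 0).2 by omega)
    (show (w n).2 ≤ -1 by omega)
  set t := tY n w with ht_def
  have htP : (w t).2 = -1 := Nat.findGreatest_spec (P := fun k => (w k).2 = -1) hky1 hky2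
  have htn : t ≤ n := Nat.findGreatest_le n
  have htlt : t < n := lt_of_le_of_ne htn (fun h => by rw [h] at htP; omega)
  have hafter : ∀ m, m ≤ n → t < m → (w m).2 ≤ -2 :=
    after_last_down (f := fun k => (w k).2) (stepY hw) (show (w n).2 ≤ -2 by omega)
  have hxafter : ∀ m, m ≤ n → t < m → 0 ≤ (w m).1 := by
    intro m hm htm
    have h1 := hafter m hm htm
    have h2 := hw.2.2.2.1 m hm
    simp only [coneC, Set.mem_setOf_eq] at h2
    omega
  have htY : tY n (reflY t w) = t := by
    apply findGreatest_eq_of htn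
    · show (reflY t w t).2 = -1
      simp [reflY, htP]
    · intro k hk1 hk2
      show ¬ ((reflY t w k).2 = -1)
      have := hafter k hk2 hk1
      simp only [reflY, if_neg (by omega : ¬ k ≤ t)]
      simp
      omega
  have hPA : PA n (reflY t w) := by
    constructor
    · exact ⟨t, htn, by simp [reflY, htP]⟩
    · rw [htY]
      intro m hm htm
      have := hxafter m hm htm
      by_cases h : m ≤ t
      · simp only [reflY, if_pos h]; exact this
      · simp only [reflY, if_neg h]; exact this
  refine ⟨⟨?_, ?_, ?_, ?_, ?_⟩, hPA, htY⟩
  · simp only [reflY, if_pos (Nat.zero_le t)]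
    exact hw.1
  · simp only [reflY, if_neg (by omega : ¬ n ≤ t)]
    rw [Prod.ext_iff]
    constructor
    · simp [hxn]
    · simp [hyn]; ring
  · intro k hk
    have hxs := stepX hw k hk
    have hys := stepY hw k hk
    by_cases h1 : k + 1 ≤ t
    · simp only [reflY, if_pos h1, if_pos (by omega : k ≤ t)]
      exact hw.2.2.1 k hk
    · by_cases h2 : k ≤ t
      · have hkeq : k = t := by omega
        have h01 : (w (k+1)).2 ≤ -2 := hafter (k+1) (by omega) (by omega)
        have hyk : (w k).2 = -1 := by rw [hkeq]; exact htP
        simp only [reflY, if_pos h2, if_neg h1]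
        rw [mem_diagSteps]
        simp only [Prod.fst_sub, Prod.snd_sub]
        omega
      · simp only [reflY, if_neg h1, if_neg h2]
        rw [mem_diagSteps]
        have := hw.2.2.1 k hk
        rw [mem_diagSteps] at this
        simp only [Prod.fst_sub, Prod.snd_sub] at this ⊢
        simp at this ⊢
        omega
  · intro k hk
    by_cases h : k ≤ t
    · simp only [reflY, if_pos h]
      exact hw.2.2.2.1 k hk
    · simp only [reflY, if_neg h]
      left
      exact hxafter k hk (by omega)
  · intro k hk
    simp only [reflY, if_neg (by omega : ¬ k ≤ t)]
    rw [hw.2.2.2.2 k hk]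
    rw [Prod.ext_iff]
    constructor
    · simp
    · simp; ring

lemma flip_forward {w : ℕ → ℤ × ℤ} (hi : 0 ≤ i) (hj : 0 ≤ j)
    (hw : IsWalk n (-2,0) (-i-2,j) coneC w) (hno : ¬ HX n w) :
    IsWalk n (0,0) (i,j) quadQ (flipX w) := by
  have hx0 : (w 0).1 = -2 := by rw [hw.1]
  have hy0 : (w 0).2 = 0 := by rw [hw.1]
  have hxn : (w n).1 = -i-2 := by rw [hw.2.1]
  have hyn : (w n).2 = j := by rw [hw.2.1]
  rw [HX] at hno
  push_neg at hno
  have hxle : ∀ k, k ≤ n → (w k).1 ≤ -2 := by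
    intro k hk
    by_contra h
    push_neg at h
    obtain ⟨m, _, hm2, hm3⟩ := ivt_up (f := fun k => (w k).1) (stepX hw)
      (Nat.zero_le k) hk (c := -1) (show (w 0).1 ≤ -1 by omega)
      (show (-1:ℤ) ≤ (w k).1 by omega)
    exact hno m (by omega) hm3
  have hyge : ∀ k, k ≤ n → 0 ≤ (w k).2 := by
    intro k hk
    have h1 := hxle k hk
    have h2 := hw.2.2.2.1 k hk
    simp only [coneC, Set.mem_setOf_eq] at h2
    omega
  refine ⟨?_, ?_, ?_, ?_, ?_⟩
  · simp only [flipX]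
    rw [Prod.ext_iff]
    constructor
    · simp [hx0]
    · simp [hy0]
  · simp only [flipX]
    rw [Prod.ext_iff]
    constructor
    · simp [hxn]; ring
    · simp [hyn]
  · intro k hk
    simp only [flipX]
    rw [mem_diagSteps]
    have := hw.2.2.1 k hk
    rw [mem_diagSteps] at this
    simp only [Prod.fst_sub, Prod.snd_sub] at this ⊢
    simp at this ⊢
    omega
  · intro k hk
    have h1 := hxle k hk
    exact ⟨show (0:ℤ) ≤ -2 - (w k).1 by omega, hyge k hk⟩
  · intro k hk
    simp only [flipX]
    rw [hw.2.2.2.2 k hk]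
    rw [Prod.ext_iff]
    constructor
    · simp; ring
    · simp

lemma flip_backward {w : ℕ → ℤ × ℤ} (hi : 0 ≤ i) (hj : 0 ≤ j)
    (hw : IsWalk n (0,0) (i,j) quadQ w) :
    IsWalk n (-2,0) (-i-2,j) coneC (flipX w) ∧ ¬ HX n (flipX w) := by
  have hx0 : (w 0).1 = 0 := by rw [hw.1]
  have hy0 : (w 0).2 = 0 := by rw [hw.1]
  have hxn : (w n).1 = i := by rw [hw.2.1]
  have hyn : (w n).2 = j := by rw [hw.2.1]
  have hreg : ∀ k, k ≤ n → 0 ≤ (w k).1 ∧ 0 ≤ (w k).2 := fun k hk => hw.2.2.2.1 k hk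
  constructor
  · refine ⟨?_, ?_, ?_, ?_, ?_⟩
    · simp only [flipX]
      rw [Prod.ext_iff]
      constructor
      · simp [hx0]
      · simp [hy0]
    · simp only [flipX]
      rw [Prod.ext_iff]
      constructor
      · simp [hxn]; ring
      · simp [hyn]
    · intro k hk
      simp only [flipX]
      rw [mem_diagSteps]
      have := hw.2.2.1 k hk
      rw [mem_diagSteps] at this
      simp only [Prod.fst_sub, Prod.snd_sub] at this ⊢
      simp at this ⊢
      omega
    · intro k hk
      right
      simp only [flipX]
      exact (hreg k hk).2
    · intro k hk
      simp only [flipX]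
      rw [hw.2.2.2.2 k hk]
      rw [Prod.ext_iff]
      constructor
      · simp; ring
      · simp
  · rw [HX]
    push_neg
    intro k hk
    simp only [flipX]
    have := (hreg k hk).1
    simp
    omega

end Refl2

section Count

variable {i j : ℤ} {n : ℕ}

lemma card_split (p q : (ℕ → ℤ × ℤ) → Prop) (hfin : Finite {w : ℕ → ℤ × ℤ // p w}) :
    Nat.card {w : ℕ → ℤ × ℤ // p w} =
      Nat.card {w : ℕ → ℤ × ℤ // p w ∧ q w} + Nat.card {w : ℕ → ℤ × ℤ // p w ∧ ¬ q w} := by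
  classical
  haveI := hfin
  haveI : Finite {w : ℕ → ℤ × ℤ // p w ∧ q w} :=
    Finite.of_injective (fun x => (⟨x.1, x.2.1⟩ : {w : ℕ → ℤ × ℤ // p w}))
      (fun a b h => by
        apply Subtype.ext
        have := congrArg Subtype.val h
        simpa using this)
  haveI : Finite {w : ℕ → ℤ × ℤ // p w ∧ ¬ q w} :=
    Finite.of_injective (fun x => (⟨x.1, x.2.1⟩ : {w : ℕ → ℤ × ℤ // p w}))
      (fun a b h => by
        apply Subtype.ext
        have := congrArg Subtype.val h
        simpa using this)
  have e : {w : ℕ → ℤ × ℤ // p w ∧ q w} ⊕ {w : ℕ → ℤ × ℤ // p w ∧ ¬ q w} ≃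
      {w : ℕ → ℤ × ℤ // p w} :=
    (Equiv.sumCongr (Equiv.subtypeSubtypeEquivSubtypeInter p q).symm
      (Equiv.subtypeSubtypeEquivSubtypeInter p (fun w => ¬ q w)).symm).trans
      (Equiv.sumCompl fun x : {w : ℕ → ℤ × ℤ // p w} => q x.1)
  rw [← Nat.card_congr e, Nat.card_sum]

lemma card_PB_eq (hi : 0 ≤ i) (hj : 0 ≤ j) :
    Nat.card {w : ℕ → ℤ × ℤ // IsWalk n (-2,0) (i,j) coneC w ∧ PB n w} =
      Nat.card {w : ℕ → ℤ × ℤ // IsWalk n (-2,0) (-i-2,j) coneC w ∧ HX n w} := by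
  refine Nat.card_congr ⟨
    fun w => ⟨reflX (tX n w.1) w.1, (reflX_forward hi hj w.2.1 w.2.2).1,
      (reflX_forward hi hj w.2.1 w.2.2).2.1⟩,
    fun w => ⟨reflX (tX n w.1) w.1, (reflX_backward hi hj w.2.1 w.2.2).1,
      (reflX_backward hi hj w.2.1 w.2.2).2.1⟩, ?_, ?_⟩
  · intro w
    apply Subtype.ext
    have h1 := reflX_forward hi hj w.2.1 w.2.2
    show reflX (tX n (reflX (tX n w.1) w.1)) (reflX (tX n w.1) w.1) = w.1
    rw [h1.2.2, reflX_reflX]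
  · intro w
    apply Subtype.ext
    have h1 := reflX_backward hi hj w.2.1 w.2.2
    show reflX (tX n (reflX (tX n w.1) w.1)) (reflX (tX n w.1) w.1) = w.1
    rw [h1.2.2, reflX_reflX]

lemma card_PA_eq (hi : 0 ≤ i) (hj : 0 ≤ j) :
    Nat.card {w : ℕ → ℤ × ℤ // IsWalk n (-2,0) (i,j) coneC w ∧ PA n w} =
      Nat.card {w : ℕ → ℤ × ℤ // IsWalk n (-2,0) (i,-j-2) coneC w} := by
  refine Nat.card_congr ⟨
    fun w => ⟨reflY (tY n w.1) w.1, (reflY_forward hi hj w.2.1 w.2.2).1⟩,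
    fun w => ⟨reflY (tY n w.1) w.1, (reflY_backward hi hj w.2).1,
      (reflY_backward hi hj w.2).2.1⟩, ?_, ?_⟩
  · intro w
    apply Subtype.ext
    have h1 := reflY_forward hi hj w.2.1 w.2.2
    show reflY (tY n (reflY (tY n w.1) w.1)) (reflY (tY n w.1) w.1) = w.1
    rw [h1.2, reflY_reflY]
  · intro w
    apply Subtype.ext
    have h1 := reflY_backward hi hj w.2
    show reflY (tY n (reflY (tY n w.1) w.1)) (reflY (tY n w.1) w.1) = w.1
    rw [h1.2.2, reflY_reflY]

lemma card_flip_eq (hi : 0 ≤ i) (hj : 0 ≤ j) :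
    Nat.card {w : ℕ → ℤ × ℤ // IsWalk n (-2,0) (-i-2,j) coneC w ∧ ¬ HX n w} =
      Nat.card {w : ℕ → ℤ × ℤ // IsWalk n (0,0) (i,j) quadQ w} := by
  refine Nat.card_congr ⟨
    fun w => ⟨flipX w.1, flip_forward hi hj w.2.1 w.2.2⟩,
    fun w => ⟨flipX w.1, (flip_backward hi hj w.2).1, (flip_backward hi hj w.2).2⟩, ?_, ?_⟩
  · intro w
    apply Subtype.ext
    show flipX (flipX w.1) = w.1
    rw [flipX_flipX]
  · intro w
    apply Subtype.ext
    show flipX (flipX w.1) = w.1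
    rw [flipX_flipX]

end Count

theorem diag_threeQuadrant_shifted_reflection_identity
    (i j : ℤ) (hi : 0 ≤ i) (hj : 0 ≤ j) (n : ℕ) :
    walkCount diagSteps coneC (-2, 0) (i, j) n +
        walkCount diagSteps quadQ (0, 0) (i, j) n =
      walkCount diagSteps coneC (-2, 0) (-i - 2, j) n +
        walkCount diagSteps coneC (-2, 0) (i, -j - 2) n := by
  classical
  rw [walkCount_eq_s13 coneC (-2,0) (i,j) n, walkCount_eq_s13 quadQ (0,0) (i,j) n,
    walkCount_eq_s13 coneC (-2,0) (-i-2,j) n, walkCount_eq_s13 coneC (-2,0) (i,-j-2) n]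
  have h1 := card_split (IsWalk n (-2,0) (i,j) coneC) (PA n)
    (isWalk_finite n (-2,0) (i,j) coneC)
  have h2 : Nat.card {w : ℕ → ℤ × ℤ // IsWalk n (-2,0) (i,j) coneC w ∧ ¬ PA n w} =
      Nat.card {w : ℕ → ℤ × ℤ // IsWalk n (-2,0) (i,j) coneC w ∧ PB n w} := by
    apply Nat.card_congr
    apply Equiv.subtypeEquivRight
    intro w
    constructor
    · rintro ⟨hw, hnA⟩
      exact ⟨hw, (cover hw hi hj).resolve_left hnA⟩
    · rintro ⟨hw, hB⟩
      exact ⟨hw, fun hA => disjointAB hw hi ⟨hA, hB⟩⟩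
  have h3 := card_split (IsWalk n (-2,0) (-i-2,j) coneC) (HX n)
    (isWalk_finite n (-2,0) (-i-2,j) coneC)
  have h4 := card_PB_eq (i := i) (j := j) (n := n) hi hj
  have h5 := card_PA_eq (i := i) (j := j) (n := n) hi hj
  have h6 := card_flip_eq (i := i) (j := j) (n := n) hi hj
  omega
end
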